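/- Let Σ be a planar model. For any ε, C, ρ > 0 there exists N_ε = N(ε, C, ρ) ∈ ℕ such that the following holds: if ω ∈ Ω and k ∈ ℕ are such that η^{(T^{k'(ω)}ω)} is (C, ρ)-Frostman on tubes, and n = k'(ω) + N_ε, then P_{i=k}( d_TV( η^(ω)_{x,i}, η^(ω)_{n,[x,i]} ) < ε ) > 1 − ε. -/

import Mathlib

open MeasureTheory Filter Set
open scoped ENNReal Topology Classical

noncomputable section

namespace SSmodel

/-- The left shift on sequence space. -/
def shiftMap {I : Type} (ω : ℕ → I) : ℕ → I := fun n => ω (n + 1)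

/-- The `j`-th iterate of the left shift. -/
def shiftN {I : Type} (j : ℕ) (ω : ℕ → I) : ℕ → I := fun n => ω (n + j)

/-- A planar model: a finite family of homogeneous self-similar IFSs on ℂ together with
probability vectors and a selection measure on the symbolic space. -/
structure PlanarModel (I : Type) [Fintype I] [MeasurableSpace I] where
  k : I → ℕ
  k_pos : ∀ i, 0 < k i
  lam : I → ℂ
  lam_ne : ∀ i, lam i ≠ 0
  lam_lt : ∀ i, ‖lam i‖ < 1
  tr : (i : I) → Fin (k i) → ℂ
  p : (i : I) → Fin (k i) → ℝ
  p_pos : ∀ i j, 0 < p i j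
  p_sum : ∀ i, ∑ j, p i j = 1
  P : Measure (ℕ → I)
  P_prob : IsProbabilityMeasure P

namespace PlanarModel

variable {I : Type} [Fintype I] [MeasurableSpace I] (M : PlanarModel I)

/-- The coding map Π_ω. -/
def codingMap (ω : ℕ → I) (u : (n : ℕ) → Fin (M.k (ω n))) : ℂ :=
  ∑' n : ℕ, (∏ j ∈ Finset.range n, M.lam (ω j)) * M.tr (ω n) (u n)

/-- Characterization of the infinite product measure ⊗ₙ p_{ωₙ} via cylinders. -/
def IsProductMeasure (ω : ℕ → I) (μ : Measure ((n : ℕ) → Fin (M.k (ω n)))) : Prop :=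
  IsProbabilityMeasure μ ∧
    ∀ (n : ℕ) (u : (j : Fin n) → Fin (M.k (ω j.val))),
      μ {x | ∀ j : Fin n, x j.val = u j} = ∏ j : Fin n, ENNReal.ofReal (M.p (ω j.val) (u j))

/-- `η` is the family of random measures η^(ω) generated by the model:
η^(ω) is the pushforward under Π_ω of the product measure ⊗ₙ p_{ωₙ}. -/
def IsCodingFamily (η : (ℕ → I) → Measure ℂ) : Prop :=
  ∀ ω : ℕ → I, ∃ μ : Measure ((n : ℕ) → Fin (M.k (ω n))),
    M.IsProductMeasure ω μ ∧ η ω = μ.map (M.codingMap ω)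

/-- Assumption (*) : the selection measure is shift-invariant and ergodic, some IFS occurring
with positive probability has two distinct maps, and some rotation occurring with positive
probability is not real. -/
def AssumptionStar : Prop :=
  Ergodic shiftMap M.P ∧
    (∃ i₀ : I, M.P {ω | ω 0 = i₀} ≠ 0 ∧ ∃ j j' : Fin (M.k i₀), M.tr i₀ j ≠ M.tr i₀ j') ∧
    (∃ i₁ : I, M.P {ω | ω 0 = i₁} ≠ 0 ∧ (M.lam i₁).im ≠ 0)

/-- Non-degeneracy of the model. -/
def NonDegenerate : Prop :=
  ∃ i₀ : I, M.P {ω | ω 0 = i₀} ≠ 0 ∧ ∃ j j' : Fin (M.k i₀), M.tr i₀ j ≠ M.tr i₀ j'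

/-- The similarity dimension of the model (entropy over Lyapunov exponent). -/
def sdim : ℝ :=
  (∫ ω, (-∑ j, M.p (ω 0) j * Real.log (M.p (ω 0) j)) ∂M.P) /
    (-∫ ω, Real.log (‖M.lam (ω 0)‖) ∂M.P)

/-- f_u^(ω)(0), for a word u of length n. -/
def finCode (ω : ℕ → I) (n : ℕ) (u : (j : Fin n) → Fin (M.k (ω j.val))) : ℂ :=
  ∑ m : Fin n, (∏ j ∈ Finset.range m.val, M.lam (ω j)) * M.tr (ω m.val) (u m)

/-- The product of the contraction parts along the first n symbols. -/
def lamProd (ω : ℕ → I) (n : ℕ) : ℂ := ∏ j ∈ Finset.range n, M.lam (ω j)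

/-- The minimal distance Δ_n^(ω) between distinct cylinder points. -/
def Delta (ω : ℕ → I) (n : ℕ) : ℝ :=
  if ∃ u v : (j : Fin n) → Fin (M.k (ω j.val)), u ≠ v then
    sInf {d : ℝ | ∃ u v : (j : Fin n) → Fin (M.k (ω j.val)), u ≠ v ∧
      d = ‖M.finCode ω n u - M.finCode ω n v‖}
  else 0

/-- `R` is a good radius for the model: the closed ball B(0,R) is mapped into itself by all the
maps and 2·R·r_min > 1/2. -/
def GoodRadius (R : ℝ) : Prop :=
  0 < R ∧ (∀ (i : I) (j : Fin (M.k i)) (z : ℂ), ‖z‖ ≤ R →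
      ‖M.lam i * z + M.tr i j‖ < R) ∧
    ∀ i : I, (1 : ℝ) / 2 < 2 * R * ‖M.lam i‖

/-- `np ω n` is the integer n'(ω) adapted to scale 2^{-n}: it satisfies
2R·∏_{i<n'} r_{ω_i} ≤ 2^{-n} ≤ 2R·∏_{i<n'-1} r_{ω_i}. -/
def IsNPrime (R : ℝ) (np : (ℕ → I) → ℕ → ℕ) : Prop :=
  ∀ (ω : ℕ → I) (n : ℕ),
    2 * R * (∏ i ∈ Finset.range (np ω n), ‖M.lam (ω i)‖) ≤ (2 : ℝ) ^ (-(n : ℤ)) ∧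
      (2 : ℝ) ^ (-(n : ℤ)) ≤ 2 * R * ∏ i ∈ Finset.range (np ω n - 1), ‖M.lam (ω i)‖

/-- The point of the circle (in the squared identification ℝP¹ ≅ 𝕋) corresponding to the
rotation part φ_i of the i-th IFS: φ_i². -/
def rotPt (i : I) : ℂ := (M.lam i / (‖M.lam i‖ : ℂ)) ^ 2

/-- Generators of the rotation group G_Σ (squared identification), together with inverses. -/
def rotGens : Set ℂ := {z | ∃ i : I, z = M.rotPt i ∨ z = (starRingEnd ℂ) (M.rotPt i)}

/-- The closed orbit G_Σ·v of a point v of the circle. -/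
def orbitClosure (v : ℂ) : Set ℂ :=
  closure ((fun g => g * v) '' ((Submonoid.closure M.rotGens : Submonoid ℂ) : Set ℂ))

/-- Characterization of ξ^(W) (for the line W corresponding to the circle point v in the
squared identification): the unique probability measure on the coset G_Σ·v invariant under
all the rotations of the model. -/
def IsXiW (v : ℂ) (ξ : Measure ℂ) : Prop :=
  IsProbabilityMeasure ξ ∧ (∀ i : I, ξ.map (fun z => M.rotPt i * z) = ξ) ∧
    ξ (M.orbitClosure v) = 1

/-- The discrete measure ν^{(ω,n)} = ∑_u p_u δ_{f_u^(ω)(0)}. -/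
def nuMeasure (ω : ℕ → I) (n : ℕ) : Measure ℂ :=
  ∑ u : (j : Fin n) → Fin (M.k (ω j.val)),
    ENNReal.ofReal (∏ j : Fin n, M.p (ω j.val) (u j)) • Measure.dirac (M.finCode ω n u)

end PlanarModel

/-! ### Entropy, components, projections -/

/-- -x·log₂ x. -/
def plog (x : ℝ) : ℝ := -(x * Real.logb 2 x)

/-- Level-n dyadic cell of ℝ² ≅ ℂ with index a ∈ ℤ². -/
def cell2 (n : ℕ) (a : ℤ × ℤ) : Set ℂ :=
  {z : ℂ | (a.1 : ℝ) ≤ (2 : ℝ) ^ n * z.re ∧ (2 : ℝ) ^ n * z.re < (a.1 : ℝ) + 1 ∧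
    (a.2 : ℝ) ≤ (2 : ℝ) ^ n * z.im ∧ (2 : ℝ) ^ n * z.im < (a.2 : ℝ) + 1}

/-- Entropy (base 2) of a measure on ℂ w.r.t. the level-n dyadic partition. -/
def H2 (μ : Measure ℂ) (n : ℕ) : ℝ := ∑' a : ℤ × ℤ, plog (μ (cell2 n a)).toReal

/-- Normalized entropy H_n(μ) = H(μ,D_n)/n for measures on ℂ. -/
def Hn2 (μ : Measure ℂ) (n : ℕ) : ℝ := H2 μ n / n

/-- Level-n dyadic cell of ℝ with index a ∈ ℤ. -/
def cell1 (n : ℕ) (a : ℤ) : Set ℝ :=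
  {x : ℝ | (a : ℝ) ≤ (2 : ℝ) ^ n * x ∧ (2 : ℝ) ^ n * x < (a : ℝ) + 1}

/-- Entropy (base 2) of a measure on ℝ w.r.t. the level-n dyadic partition. -/
def H1 (μ : Measure ℝ) (n : ℕ) : ℝ := ∑' a : ℤ, plog (μ (cell1 n a)).toReal

/-- Normalized entropy for measures on ℝ. -/
def Hn1 (μ : Measure ℝ) (n : ℕ) : ℝ := H1 μ n / n

/-- Orthogonal projection of the plane onto the line with unit direction w,
composed with the isometry to ℝ: z ↦ ⟨z,w⟩. -/
def projMap (w : ℂ) (z : ℂ) : ℝ := z.re * w.re + z.im * w.im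

/-- Normalized entropy of the projection π_W μ, W the line with unit direction w. -/
def projHn (w : ℂ) (μ : Measure ℂ) (m : ℕ) : ℝ := Hn1 (μ.map (projMap w)) m

/-- Unit vectors of the plane. -/
abbrev UnitVec : Type := {w : ℂ // ‖w‖ = 1}

/-- A fixed choice of direction (unit vector) of the line corresponding to the circle
point v in the squared identification ℝP¹ ≅ 𝕋: a square root of v. -/
def lineDir (v : ℂ) : ℂ := Complex.exp (Complex.log v / 2)

/-- Index of the level-n dyadic cell containing x. -/
def cellIdx (n : ℕ) (x : ℂ) : ℤ × ℤ := (⌊(2 : ℝ) ^ n * x.re⌋, ⌊(2 : ℝ) ^ n * x.im⌋)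

/-- The level-n dyadic cell D_n(x) containing x. -/
def dyadicCellOf (n : ℕ) (x : ℂ) : Set ℂ := cell2 n (cellIdx n x)

/-- The homothety T_D mapping D_n(x) onto the unit square. -/
def rescaleMap (n : ℕ) (x : ℂ) (z : ℂ) : ℂ :=
  (2 : ℂ) ^ n * z - (((cellIdx n x).1 : ℂ) + ((cellIdx n x).2 : ℂ) * Complex.I)

/-- Raw component μ_{x,n}: normalized restriction of μ to D_n(x). -/
def rawComponent (μ : Measure ℂ) (n : ℕ) (x : ℂ) : Measure ℂ :=
  (μ (dyadicCellOf n x))⁻¹ • μ.restrict (dyadicCellOf n x)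

/-- Rescaled component μ^{x,n} = T_{D_n(x)}(μ_{x,n}). -/
def rescaledComponent (μ : Measure ℂ) (n : ℕ) (x : ℂ) : Measure ℂ :=
  (rawComponent μ n x).map (rescaleMap n x)

/-- μ is exact dimensional with dimension α. -/
def ExactDim (μ : Measure ℂ) (α : ℝ) : Prop :=
  ∀ᵐ x ∂μ, Tendsto (fun r : ℝ => Real.log (μ (Metric.closedBall x r)).toReal / Real.log r)
    (𝓝[>] (0 : ℝ)) (𝓝 α)

/-- The saturation dimension satdim(μ, ε, m, k): the maximal dimension of a subspace V ≤ ℝ²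
such that the proportion (w.r.t. μ) of level-k rescaled components that are (V,ε,m)-saturated
is at least 1-ε. (A measure ν is (V,ε,m)-saturated if H_m(ν) ≥ H_m(π_{V⊥}ν) + dim V − ε;
the subspaces of ℝ² ≅ ℂ are 0, the lines span(w), and ℝ² itself, and for V = span(w) the
orthogonal complement is the line with unit direction i·w.) -/
def satdim (μ : Measure ℂ) (ε : ℝ) (m k : ℕ) : ℕ :=
  if (1 - ε : ℝ) ≤ (μ {x | 2 - ε ≤ Hn2 (rescaledComponent μ k x) m}).toReal then 2
  else if ∃ w : ℂ, ‖w‖ = 1 ∧ (1 - ε : ℝ) ≤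
      (μ {x | projHn (Complex.I * w) (rescaledComponent μ k x) m + 1 - ε ≤
        Hn2 (rescaledComponent μ k x) m}).toReal then 1
  else 0

/-- μ is (C,ρ)-Frostman on tubes: μ(B(W+x,r)) ≤ C·r^ρ for every line W+x and r>0. -/
def FrostmanOnTubes (μ : Measure ℂ) (C ρ : ℝ) : Prop :=
  ∀ w : ℂ, ‖w‖ = 1 → ∀ x : ℂ, ∀ r : ℝ, 0 < r →
    μ {z : ℂ | |((z - x) * (starRingEnd ℂ) w).im| < r} ≤ ENNReal.ofReal (C * r ^ ρ)

/-- Total variation distance between finite Borel measures on ℂ. -/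
def dTV (μ ν : Measure ℂ) : ℝ :=
  ⨆ s : {s : Set ℂ // MeasurableSet s}, |(μ s.1).toReal - (ν s.1).toReal|

/-- Conditional entropy H(μ, D_m | D_n) (base 2). -/
def condH (μ : Measure ℂ) (m n : ℕ) : ℝ :=
  ∑' a : ℤ × ℤ, (μ (cell2 n a)).toReal * H2 ((μ (cell2 n a))⁻¹ • μ.restrict (cell2 n a)) m

/-- The Fourier transform of a measure on ℂ ≅ ℝ². -/
def FT (μ : Measure ℂ) (ξ : ℂ) : ℂ :=
  ∫ z, Complex.exp (2 * Real.pi * Complex.I * ((z * (starRingEnd ℂ) ξ).re : ℂ)) ∂μ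

/-- μ ∈ 𝒟₂(σ): power Fourier decay with exponent σ. -/
def MemD2 (μ : Measure ℂ) (σ : ℝ) : Prop :=
  ∃ C : ℝ, ∀ ξ : ℂ, 1 ≤ ‖ξ‖ → ‖FT μ ξ‖ ≤ C * ‖ξ‖ ^ (-σ)

/-- ℙ is a Bernoulli measure on I^ℕ. -/
def IsBernoulli {I : Type} [Fintype I] [MeasurableSpace I] (P : Measure (ℕ → I)) : Prop :=
  IsProbabilityMeasure P ∧ ∃ q : I → ℝ, (∀ i, 0 ≤ q i) ∧ ∑ i, q i = 1 ∧
    ∀ (n : ℕ) (u : Fin n → I),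
      P {ω | ∀ j : Fin n, ω j.val = u j} = ∏ j : Fin n, ENNReal.ofReal (q (u j))

/-- ℙ is a fully supported Bernoulli measure on I^ℕ. -/
def IsFullBernoulli {I : Type} [Fintype I] [MeasurableSpace I] (P : Measure (ℕ → I)) : Prop :=
  IsProbabilityMeasure P ∧ ∃ q : I → ℝ, (∀ i, 0 < q i) ∧ ∑ i, q i = 1 ∧
    ∀ (n : ℕ) (u : Fin n → I),
      P {ω | ∀ j : Fin n, ω j.val = u j} = ∏ j : Fin n, ENNReal.ofReal (q (u j))

end SSmodel

namespace SSmodel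

/-- The (unnormalized) n-truncated k-component: the part of the n-th level decomposition of
η^(ω) consisting of the pieces f_u η^{(Tⁿω)} whose supporting ball B_u^(ω) = f_u(B(0,R)) is
contained in the dyadic cell D_k(x). -/
def truncSum {I : Type} [Fintype I] [MeasurableSpace I] (M : PlanarModel I)
    (η : (ℕ → I) → Measure ℂ) (R : ℝ) (ω : ℕ → I) (n k : ℕ) (x : ℂ) : Measure ℂ :=
  ∑ u : (j : Fin n) → Fin (M.k (ω j.val)),
    if ∀ z : ℂ, ‖z‖ ≤ R → M.lamProd ω n * z + M.finCode ω n u ∈ dyadicCellOf k x then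
      ENNReal.ofReal (∏ j : Fin n, M.p (ω j.val) (u j)) •
        ((η (shiftN n ω)).map (fun z => M.lamProd ω n * z + M.finCode ω n u))
    else 0

/-- The n-truncated k-component η^(ω)_{n,[x,k]} (normalized). -/
def truncComponent {I : Type} [Fintype I] [MeasurableSpace I] (M : PlanarModel I)
    (η : (ℕ → I) → Measure ℂ) (R : ℝ) (ω : ℕ → I) (n k : ℕ) (x : ℂ) : Measure ℂ :=
  (truncSum M η R ω n k x Set.univ)⁻¹ • truncSum M η R ω n k x

end SSmodel

open SSmodel SSmodel.PlanarModel
namespace SSmodel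

/-! ### Part B: uniqueness of measures on infinite products of finite types -/

/-- Initial point cylinder. -/
def pcyl {κ : ℕ → ℕ} (n : ℕ) (u : ∀ j : Fin n, Fin (κ j.val)) : Set (∀ m, Fin (κ m)) :=
  {x | ∀ j : Fin n, x j.val = u j}

lemma pcyl_zero {κ : ℕ → ℕ} (u : ∀ j : Fin 0, Fin (κ j.val)) : pcyl 0 u = Set.univ := by
  ext x; simp [pcyl]

lemma measurableSet_pcyl {κ : ℕ → ℕ} (n : ℕ) (u : ∀ j : Fin n, Fin (κ j.val)) :
    MeasurableSet (pcyl (κ := κ) n u) := by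
  have : pcyl (κ := κ) n u = ⋂ j : Fin n, (fun x : ∀ m, Fin (κ m) => x j.val) ⁻¹' {u j} := by
    ext x; simp [pcyl]
  rw [this]
  exact MeasurableSet.iInter fun j => (measurable_pi_apply _) (measurableSet_singleton _)

lemma generateFrom_pcyl (κ : ℕ → ℕ) :
    (MeasurableSpace.pi : MeasurableSpace (∀ m, Fin (κ m))) =
      MeasurableSpace.generateFrom {S | ∃ n u, S = pcyl (κ := κ) n u} := by
  apply le_antisymm
  · have hmeas : ∀ m : ℕ, @Measurable _ _
        (MeasurableSpace.generateFrom {S | ∃ n u, S = pcyl (κ := κ) n u}) _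
        (fun x : ∀ m, Fin (κ m) => x m) := by
      intro m
      apply @measurable_to_countable' _ _ _ _ (MeasurableSpace.generateFrom _)
      intro t
      have heq : ((fun x : ∀ m, Fin (κ m) => x m) ⁻¹' {t}) =
          ⋃ (u : ∀ j : Fin (m+1), Fin (κ j.val)) (_ : u ⟨m, Nat.lt_succ_self m⟩ = t),
            pcyl (κ := κ) (m+1) u := by
        ext x
        simp only [Set.mem_preimage, Set.mem_singleton_iff, Set.mem_iUnion]
        constructor
        · intro hx
          exact ⟨fun j => x j.val, hx, fun j => rfl⟩
        · rintro ⟨u, hu, hx⟩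
          have := hx ⟨m, Nat.lt_succ_self m⟩
          rw [this, hu]
      rw [heq]
      exact MeasurableSet.iUnion fun u => MeasurableSet.iUnion fun _ =>
        MeasurableSpace.measurableSet_generateFrom ⟨m+1, u, rfl⟩
    rw [MeasurableSpace.pi]
    exact iSup_le fun m => measurable_iff_comap_le.mp (hmeas m)
  · apply MeasurableSpace.generateFrom_le
    rintro S ⟨n, u, rfl⟩
    exact measurableSet_pcyl n u

lemma isPiSystem_pcyl (κ : ℕ → ℕ) : IsPiSystem {S | ∃ n u, S = pcyl (κ := κ) n u} := by
  have key : ∀ (n n' : ℕ) (u : ∀ j : Fin n, Fin (κ j.val)) (u' : ∀ j : Fin n', Fin (κ j.val)),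
      n ≤ n' → (pcyl n u ∩ pcyl n' u').Nonempty → pcyl n u ∩ pcyl n' u' = pcyl n' u' := by
    rintro n n' u u' hle ⟨x, hxu, hxu'⟩
    apply Set.inter_eq_self_of_subset_right
    intro y hy j
    have h1 : x j.val = u j := hxu j
    have h2 : x j.val = u' ⟨j.val, lt_of_lt_of_le j.isLt hle⟩ :=
      hxu' ⟨j.val, lt_of_lt_of_le j.isLt hle⟩
    have h3 : y j.val = u' ⟨j.val, lt_of_lt_of_le j.isLt hle⟩ :=
      hy ⟨j.val, lt_of_lt_of_le j.isLt hle⟩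
    rw [h3, ← h2, h1]
  rintro S ⟨n, u, rfl⟩ T ⟨n', u', rfl⟩ hne
  rcases le_total n n' with h | h
  · rw [key n n' u u' h hne]; exact ⟨n', u', rfl⟩
  · rw [Set.inter_comm] at hne ⊢
    rw [key n' n u' u h hne]; exact ⟨n, u, rfl⟩

lemma measure_ext_pcyl {κ : ℕ → ℕ} (μ ν : Measure (∀ m, Fin (κ m))) [IsFiniteMeasure μ]
    (h : ∀ (n : ℕ) (u : ∀ j : Fin n, Fin (κ j.val)), μ (pcyl n u) = ν (pcyl n u)) : μ = ν := by
  refine ext_of_generate_finite _ (generateFrom_pcyl κ) (isPiSystem_pcyl κ) ?_ ?_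
  · rintro S ⟨n, u, rfl⟩; exact h n u
  · have := h 0 (fun j => j.elim0)
    rwa [pcyl_zero] at this

/-! ### Part C: basic facts about the coding map -/

namespace PlanarModel

variable {I : Type} [Fintype I] [MeasurableSpace I] {M : PlanarModel I} {R : ℝ}

lemma nonempty_index (M : PlanarModel I) : Nonempty I := by
  by_contra h
  haveI : IsEmpty I := not_nonempty_iff.mp h
  haveI : IsEmpty (ℕ → I) := ⟨fun f => IsEmpty.false (f 0)⟩
  have h1 : M.P Set.univ = 1 := M.P_prob.measure_univ
  rw [Set.univ_eq_empty_iff.mpr ‹_›, measure_empty] at h1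
  exact zero_ne_one h1

lemma exists_q (M : PlanarModel I) :
    ∃ q : ℝ, 0 < q ∧ q < 1 ∧ ∀ i, ‖M.lam i‖ ≤ q := by
  obtain ⟨i0⟩ := M.nonempty_index
  have hne : (Finset.univ : Finset I).Nonempty := ⟨i0, Finset.mem_univ i0⟩
  refine ⟨Finset.univ.sup' hne (fun i => ‖M.lam i‖), ?_, ?_, ?_⟩
  · exact lt_of_lt_of_le (norm_pos_iff.mpr (M.lam_ne i0))
      (Finset.le_sup' (f := fun i => ‖M.lam i‖) (Finset.mem_univ i0))
  · exact (Finset.sup'_lt_iff hne).mpr fun i _ => M.lam_lt i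
  · exact fun i => Finset.le_sup' (f := fun i => ‖M.lam i‖) (Finset.mem_univ i)

lemma tr_abs_lt (hR : M.GoodRadius R) (i : I) (j : Fin (M.k i)) :
    ‖M.tr i j‖ < R := by
  have := hR.2.1 i j 0 (by simpa using hR.1.le)
  simpa using this

lemma exists_trBound (M : PlanarModel I) :
    ∃ T : ℝ, 0 ≤ T ∧ ∀ (i : I) (j : Fin (M.k i)), ‖M.tr i j‖ ≤ T := by
  obtain ⟨i0⟩ := M.nonempty_index
  set g : (i : I) × Fin (M.k i) → ℝ := fun s => ‖M.tr s.1 s.2‖ with hg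
  obtain ⟨T, hT⟩ := (Set.finite_range g).bddAbove
  have hT' : ∀ (i : I) (j : Fin (M.k i)), ‖M.tr i j‖ ≤ T := fun i j =>
    hT (Set.mem_range_self (⟨i, j⟩ : (i : I) × Fin (M.k i)))
  exact ⟨T, le_trans (norm_nonneg _) (hT' i0 ⟨0, M.k_pos i0⟩), hT'⟩

lemma prod_abs_lam_le {q : ℝ} (hq : ∀ i, ‖M.lam i‖ ≤ q) (ω : ℕ → I) (n : ℕ) :
    (∏ j ∈ Finset.range n, ‖M.lam (ω j)‖) ≤ q ^ n := by
  calc (∏ j ∈ Finset.range n, ‖M.lam (ω j)‖)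
      ≤ ∏ _j ∈ Finset.range n, q :=
        Finset.prod_le_prod (fun j _ => norm_nonneg _) (fun j _ => hq _)
    _ = q ^ n := by rw [Finset.prod_const, Finset.card_range]

lemma summable_term (M : PlanarModel I) (ω : ℕ → I) (x : ∀ n, Fin (M.k (ω n))) :
    Summable (fun n => (∏ j ∈ Finset.range n, M.lam (ω j)) * M.tr (ω n) (x n)) := by
  obtain ⟨q, hq0, hq1, hq⟩ := M.exists_q
  obtain ⟨T, hT0, hT⟩ := M.exists_trBound
  apply Summable.of_norm_bounded (g := fun n => T * q ^ n)
    ((summable_geometric_of_lt_one hq0.le hq1).mul_left T)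
  intro n
  rw [norm_mul, norm_prod]
  calc (∏ j ∈ Finset.range n, ‖M.lam (ω j)‖) * ‖M.tr (ω n) (x n)‖
      ≤ q ^ n * T := by
        apply mul_le_mul (prod_abs_lam_le hq ω n) (hT _ _) (norm_nonneg _)
          (pow_nonneg hq0.le n)
    _ = T * q ^ n := mul_comm _ _

lemma partial_bound (hR : M.GoodRadius R) (ω : ℕ → I) (x : ∀ n, Fin (M.k (ω n))) :
    ∀ (n : ℕ) (z : ℂ), ‖z‖ ≤ R →
      ‖(∏ j ∈ Finset.range n, M.lam (ω j)) * z +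
        ∑ m ∈ Finset.range n, (∏ j ∈ Finset.range m, M.lam (ω j)) * M.tr (ω m) (x m)‖ ≤ R := by
  intro n
  induction n with
  | zero => intro z hz; simpa using hz
  | succ n ih =>
    intro z hz
    have h1 : (∏ j ∈ Finset.range (n+1), M.lam (ω j)) * z +
        ∑ m ∈ Finset.range (n+1), (∏ j ∈ Finset.range m, M.lam (ω j)) * M.tr (ω m) (x m) =
        (∏ j ∈ Finset.range n, M.lam (ω j)) * (M.lam (ω n) * z + M.tr (ω n) (x n)) +
        ∑ m ∈ Finset.range n, (∏ j ∈ Finset.range m, M.lam (ω j)) * M.tr (ω m) (x m) := by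
      rw [Finset.prod_range_succ, Finset.sum_range_succ]; ring
    rw [h1]
    exact ih _ (le_of_lt (hR.2.1 (ω n) (x n) z hz))

lemma abs_codingMap_le (hR : M.GoodRadius R) (ω : ℕ → I) (x : ∀ n, Fin (M.k (ω n))) :
    ‖M.codingMap ω x‖ ≤ R := by
  have hsum := summable_term M ω x
  have ht := hsum.hasSum.tendsto_sum_nat
  refine le_of_tendsto ((continuous_norm.tendsto _).comp ht)
    (Filter.Eventually.of_forall fun n => ?_)
  have := partial_bound hR ω x n 0 (by simpa using hR.1.le)
  simpa using this

lemma measurable_codingMap (M : PlanarModel I) (ω : ℕ → I) : Measurable (M.codingMap ω) := by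
  apply measurable_of_tendsto_metrizable'
    (f := fun n (x : ∀ m, Fin (M.k (ω m))) =>
      ∑ m ∈ Finset.range n, (∏ j ∈ Finset.range m, M.lam (ω j)) * M.tr (ω m) (x m)) Filter.atTop
  · intro n
    exact Finset.measurable_sum _ fun m _ =>
      ((measurable_of_countable _).comp (measurable_pi_apply m)).const_mul _
  · rw [tendsto_pi_nhds]
    intro x
    exact (summable_term M ω x).hasSum.tendsto_sum_nat

lemma eta_prob {η : (ℕ → I) → Measure ℂ} (hη : M.IsCodingFamily η) (ω : ℕ → I) :
    IsProbabilityMeasure (η ω) := by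
  obtain ⟨μ, ⟨hμp, _⟩, hmap⟩ := hη ω
  rw [hmap]
  haveI := hμp
  exact Measure.isProbabilityMeasure_map (measurable_codingMap M ω).aemeasurable

lemma measurableSet_absGt (R : ℝ) : MeasurableSet {z : ℂ | R < ‖z‖} :=
  (isOpen_lt continuous_const continuous_norm).measurableSet

lemma eta_outside {η : (ℕ → I) → Measure ℂ} (hη : M.IsCodingFamily η) (hR : M.GoodRadius R)
    (ω : ℕ → I) : η ω {z : ℂ | R < ‖z‖} = 0 := by
  obtain ⟨μ, ⟨hμp, _⟩, hmap⟩ := hη ω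
  rw [hmap, Measure.map_apply (measurable_codingMap M ω) (measurableSet_absGt R)]
  have : M.codingMap ω ⁻¹' {z : ℂ | R < ‖z‖} = ∅ := by
    apply Set.eq_empty_iff_forall_notMem.mpr
    intro x hx
    exact absurd hx (not_lt.mpr (abs_codingMap_le hR ω x))
  rw [this, measure_empty]

lemma measure_superset_ball_eq_one {η : (ℕ → I) → Measure ℂ} (hη : M.IsCodingFamily η)
    (hR : M.GoodRadius R) (ω : ℕ → I) {s : Set ℂ}
    (hs : ∀ z : ℂ, ‖z‖ ≤ R → z ∈ s) : η ω s = 1 := by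
  haveI := eta_prob hη ω
  apply le_antisymm prob_le_one
  have h1 : (1 : ℝ≥0∞) = η ω Set.univ := (measure_univ).symm
  rw [h1]
  have : (Set.univ : Set ℂ) ⊆ s ∪ {z : ℂ | R < ‖z‖} := by
    intro z _
    rcases le_or_gt (‖z‖) R with h | h
    · exact Or.inl (hs z h)
    · exact Or.inr h
  calc η ω Set.univ ≤ η ω (s ∪ {z : ℂ | R < ‖z‖}) := measure_mono this
    _ ≤ η ω s + η ω {z : ℂ | R < ‖z‖} := measure_union_le _ _
    _ = η ω s := by rw [eta_outside hη hR ω, add_zero]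

lemma codingMap_split (ω : ℕ → I) (n : ℕ) (u : ∀ j : Fin n, Fin (M.k (ω j.val)))
    (x : ∀ m, Fin (M.k (ω m))) (hx : ∀ j : Fin n, x j.val = u j) :
    M.codingMap ω x =
      M.lamProd ω n * M.codingMap (shiftN n ω) (fun m => x (m + n)) + M.finCode ω n u := by
  have hsum := summable_term M ω x
  rw [codingMap, ← hsum.sum_add_tsum_nat_add n]
  have h1 : (∑ m ∈ Finset.range n, (∏ j ∈ Finset.range m, M.lam (ω j)) * M.tr (ω m) (x m))
      = M.finCode ω n u := by
    rw [finCode, ← Fin.sum_univ_eq_sum_range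
      (fun m => (∏ j ∈ Finset.range m, M.lam (ω j)) * M.tr (ω m) (x m)) n]
    exact Finset.sum_congr rfl fun j _ => by rw [hx j]
  have h2 : (∑' m : ℕ, (∏ j ∈ Finset.range (m + n), M.lam (ω j)) * M.tr (ω (m + n)) (x (m + n)))
      = M.lamProd ω n * M.codingMap (shiftN n ω) (fun m => x (m + n)) := by
    have hterm : ∀ m : ℕ, (∏ j ∈ Finset.range (m + n), M.lam (ω j)) * M.tr (ω (m + n)) (x (m + n))
        = M.lamProd ω n *
          ((∏ j ∈ Finset.range m, M.lam (shiftN n ω j)) * M.tr (shiftN n ω m) (x (m + n))) := by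
      intro m
      have hprod : (∏ j ∈ Finset.range (m + n), M.lam (ω j))
          = M.lamProd ω n * ∏ j ∈ Finset.range m, M.lam (shiftN n ω j) := by
        rw [Nat.add_comm m n, Finset.prod_range_add, lamProd]
        congr 1
        exact Finset.prod_congr rfl fun j _ => by simp [shiftN, Nat.add_comm]
      rw [hprod, mul_assoc]
      rfl
    rw [tsum_congr hterm, tsum_mul_left]
    rfl
  rw [h1, h2, add_comm]

end PlanarModel
end SSmodel
namespace SSmodel

lemma val_congr_pi {κ : ℕ → ℕ} (x : ∀ m, Fin (κ m)) {a b : ℕ} (h : a = b) :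
    (x a).val = (x b).val := by cases h; rfl

lemma dval_congr {α : Sort*} {g : α → ℕ} (w : ∀ a : α, Fin (g a)) {a b : α} (h : a = b) :
    (w a).val = (w b).val := by cases h; rfl

/-- Splicing a word of length n with a word of length m for the shifted sequence. -/
def splice {κ : ℕ → ℕ} (n m : ℕ) (u : ∀ j : Fin n, Fin (κ j.val))
    (v : ∀ j : Fin m, Fin (κ (j.val + n))) (j : Fin (n + m)) : Fin (κ j.val) :=
  if h : (j : ℕ) < n then u ⟨j, h⟩
  else Fin.cast (congrArg κ (Nat.sub_add_cancel (le_of_not_gt h)))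
    (v ⟨(j : ℕ) - n, by omega⟩)

lemma splice_val_lo {κ : ℕ → ℕ} {n m : ℕ} (u : ∀ j : Fin n, Fin (κ j.val))
    (v : ∀ j : Fin m, Fin (κ (j.val + n))) (j : Fin (n + m)) (h : (j : ℕ) < n) :
    (splice n m u v j).val = (u ⟨j, h⟩).val := by rw [splice, dif_pos h]

lemma splice_val_hi {κ : ℕ → ℕ} {n m : ℕ} (u : ∀ j : Fin n, Fin (κ j.val))
    (v : ∀ j : Fin m, Fin (κ (j.val + n))) (j : Fin (n + m)) (h : ¬ (j : ℕ) < n) :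
    (splice n m u v j).val = (v ⟨(j : ℕ) - n, by omega⟩).val := by
  rw [splice, dif_neg h]; exact Fin.coe_cast _ _

lemma tail_pcyl_inter {κ : ℕ → ℕ} (n m : ℕ) (u : ∀ j : Fin n, Fin (κ j.val))
    (v : ∀ j : Fin m, Fin (κ (j.val + n))) :
    ((fun (x : ∀ a, Fin (κ a)) (a : ℕ) => x (a + n)) ⁻¹'
        (pcyl (κ := fun a => κ (a + n)) m v)) ∩ pcyl (κ := κ) n u
      = pcyl (κ := κ) (n + m) (splice n m u v) := by
  ext x
  simp only [pcyl, Set.mem_inter_iff, Set.mem_preimage, Set.mem_setOf_eq]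
  constructor
  · rintro ⟨h1, h2⟩ j
    by_cases hj : (j : ℕ) < n
    · exact Fin.ext ((congrArg Fin.val (h2 ⟨j, hj⟩)).trans (splice_val_lo u v j hj).symm)
    · refine Fin.ext ?_
      calc (x (j : ℕ)).val
          = (x ((j : ℕ) - n + n)).val := val_congr_pi x (Nat.sub_add_cancel (le_of_not_gt hj)).symm
        _ = (v ⟨(j : ℕ) - n, by omega⟩).val := congrArg Fin.val (h1 ⟨(j : ℕ) - n, by omega⟩)
        _ = (splice n m u v j).val := (splice_val_hi u v j hj).symm
  · intro h
    constructor
    · intro i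
      refine Fin.ext ?_
      calc (x (i.val + n)).val
          = (x (n + i.val)).val := val_congr_pi x (Nat.add_comm _ _)
        _ = (splice n m u v ⟨n + i.val, by omega⟩).val :=
            congrArg Fin.val (h ⟨n + i.val, by omega⟩)
        _ = (v ⟨n + i.val - n, by omega⟩).val :=
            splice_val_hi u v ⟨n + i.val, by omega⟩ (show ¬ n + i.val < n by omega)
        _ = (v i).val := dval_congr v (Fin.ext (show n + i.val - n = i.val by omega))
    · intro j
      refine Fin.ext ?_
      calc (x (j : ℕ)).val
          = (splice n m u v ⟨(j : ℕ), by omega⟩).val := congrArg Fin.val (h ⟨(j : ℕ), by omega⟩)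
        _ = (u ⟨(j : ℕ), j.isLt⟩).val := splice_val_lo u v ⟨(j : ℕ), by omega⟩ j.isLt
        _ = (u j).val := dval_congr u (Fin.ext rfl)

namespace PlanarModel

variable {I : Type} [Fintype I] [MeasurableSpace I] {M : PlanarModel I} {R : ℝ}
variable {η : (ℕ → I) → Measure ℂ}

lemma p_congr (ω : ℕ → I) {a b : ℕ} (h : a = b) (s : Fin (M.k (ω a))) (t : Fin (M.k (ω b)))
    (hst : s.val = t.val) : M.p (ω a) s = M.p (ω b) t := by
  cases h
  cases Fin.ext hst
  rfl

lemma tail_measurable (M : PlanarModel I) (ω : ℕ → I) (n : ℕ) :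
    Measurable (β := ∀ m, Fin (M.k (shiftN n ω m)))
      (fun (x : ∀ m, Fin (M.k (ω m))) (m : ℕ) => x (m + n)) :=
  measurable_pi_lambda _ fun m => measurable_pi_apply (m + n)

lemma prod_measure_tail (ω : ℕ → I) (n : ℕ) {μ : Measure (∀ m, Fin (M.k (ω m)))}
    {μ' : Measure (∀ m, Fin (M.k (shiftN n ω m)))}
    (hμ : M.IsProductMeasure ω μ) (hμ' : M.IsProductMeasure (shiftN n ω) μ')
    (u : ∀ j : Fin n, Fin (M.k (ω j.val))) :
    ((μ.restrict (pcyl (κ := fun m => M.k (ω m)) n u)).map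
        (fun x (m : ℕ) => x (m + n)) : Measure (∀ m, Fin (M.k (shiftN n ω m)))) =
      (∏ j : Fin n, ENNReal.ofReal (M.p (ω j.val) (u j))) • μ' := by
  haveI := hμ.1
  haveI : IsFiniteMeasure ((μ.restrict (pcyl (κ := fun m => M.k (ω m)) n u)).map
      (fun x (m : ℕ) => x (m + n)) : Measure (∀ m, Fin (M.k (shiftN n ω m)))) := by
    exact Measure.isFiniteMeasure_map _ _
  apply measure_ext_pcyl (κ := fun m => M.k (shiftN n ω m))
  intro m v
  rw [Measure.map_apply (tail_measurable M ω n) (measurableSet_pcyl m v),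
    Measure.restrict_apply ((tail_measurable M ω n) (measurableSet_pcyl m v)),
    ]
  have hset : ((fun (x : ∀ m, Fin (M.k (ω m))) (m : ℕ) => x (m + n)) ⁻¹'
        (pcyl (κ := fun m => M.k (shiftN n ω m)) m v)
        ∩ pcyl (κ := fun m => M.k (ω m)) n u)
      = pcyl (κ := fun m => M.k (ω m)) (n + m)
          (splice (κ := fun m => M.k (ω m)) n m u v) :=
    tail_pcyl_inter (κ := fun m => M.k (ω m)) n m u v
  refine (congrArg (⇑μ) hset).trans ?_
  rw [Measure.smul_apply, smul_eq_mul]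
  have hL := hμ.2 (n + m) (splice (κ := fun m => M.k (ω m)) n m u v)
  have hR := hμ'.2 m v
  rw [show pcyl (κ := fun m => M.k (ω m)) (n + m) (splice (κ := fun m => M.k (ω m)) n m u v)
      = {x | ∀ j : Fin (n + m), x j.val = splice (κ := fun m => M.k (ω m)) n m u v j} from rfl,
    hL]
  rw [show pcyl (κ := fun m => M.k (shiftN n ω m)) m v
      = {x | ∀ j : Fin m, x j.val = v j} from rfl, hR]
  rw [Fin.prod_univ_add (f := fun j : Fin (n + m) =>
    ENNReal.ofReal (M.p (ω j.val) (splice (κ := fun m => M.k (ω m)) n m u v j)))]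
  congr 1
  · apply Finset.prod_congr rfl
    intro j _
    congr 1
    have hval : (splice (κ := fun m => M.k (ω m)) n m u v (Fin.castAdd m j)).val = (u j).val :=
      (splice_val_lo _ _ (Fin.castAdd m j) j.isLt).trans (dval_congr u (Fin.ext rfl))
    exact p_congr ω rfl _ _ hval
  · apply Finset.prod_congr rfl
    intro i _
    congr 1
    have hval : (splice (κ := fun m => M.k (ω m)) n m u v (Fin.natAdd n i)).val = (v i).val :=
      (splice_val_hi _ _ (Fin.natAdd n i) (show ¬ n + i.val < n by omega)).trans
        (dval_congr v (Fin.ext (show n + i.val - n = i.val by omega)))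
    exact p_congr ω (Nat.add_comm n i.val) _ (v i) hval

lemma measurable_affine (c t : ℂ) : Measurable (fun z : ℂ => c * z + t) :=
  (measurable_id.const_mul c).add_const t

lemma eta_decomp (hη : M.IsCodingFamily η) (ω : ℕ → I) (n : ℕ) :
    η ω = ∑ u : ∀ j : Fin n, Fin (M.k (ω j.val)),
      ENNReal.ofReal (∏ j : Fin n, M.p (ω j.val) (u j)) •
        ((η (shiftN n ω)).map (fun z => M.lamProd ω n * z + M.finCode ω n u)) := by
  obtain ⟨μ, hμ, hmap⟩ := hη ω
  obtain ⟨μ', hμ', hmap'⟩ := hη (shiftN n ω)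
  haveI := hμ.1
  haveI := hμ'.1
  ext s hs
  rw [hmap, Measure.map_apply (measurable_codingMap M ω) hs]
  have hcover : (⋃ u : ∀ j : Fin n, Fin (M.k (ω j.val)),
      pcyl (κ := fun m => M.k (ω m)) n u) = Set.univ := by
    apply Set.eq_univ_iff_forall.mpr
    intro x
    exact Set.mem_iUnion.mpr ⟨fun j => x j.val, fun j => rfl⟩
  have hpart : M.codingMap ω ⁻¹' s = ⋃ u : ∀ j : Fin n, Fin (M.k (ω j.val)),
      (M.codingMap ω ⁻¹' s ∩ pcyl (κ := fun m => M.k (ω m)) n u) := by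
    rw [← Set.inter_iUnion, hcover, Set.inter_univ]
  have hdisj : Pairwise (Function.onFun Disjoint (fun u : ∀ j : Fin n, Fin (M.k (ω j.val)) =>
      M.codingMap ω ⁻¹' s ∩ pcyl (κ := fun m => M.k (ω m)) n u)) := by
    intro u u' huu
    refine Set.disjoint_left.mpr ?_
    rintro x ⟨_, hx⟩ ⟨_, hx'⟩
    exact huu (funext fun j => (hx j).symm.trans (hx' j))
  have hmeas : ∀ u : ∀ j : Fin n, Fin (M.k (ω j.val)),
      MeasurableSet (M.codingMap ω ⁻¹' s ∩ pcyl (κ := fun m => M.k (ω m)) n u) :=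
    fun u => ((measurable_codingMap M ω) hs).inter (measurableSet_pcyl (κ := fun m => M.k (ω m)) n u)
  rw [hpart, measure_iUnion hdisj hmeas, tsum_fintype]
  rw [Measure.finset_sum_apply]
  apply Finset.sum_congr rfl
  intro u _
  have hB : MeasurableSet ((M.codingMap (shiftN n ω)) ⁻¹'
      ((fun z => M.lamProd ω n * z + M.finCode ω n u) ⁻¹' s)) :=
    (measurable_codingMap M (shiftN n ω)) ((measurable_affine _ _) hs)
  have hsplitset : M.codingMap ω ⁻¹' s ∩ pcyl (κ := fun m => M.k (ω m)) n u
      = (fun (x : ∀ m, Fin (M.k (ω m))) (m : ℕ) => x (m + n)) ⁻¹'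
          ((M.codingMap (shiftN n ω)) ⁻¹' ((fun z => M.lamProd ω n * z + M.finCode ω n u) ⁻¹' s))
        ∩ pcyl (κ := fun m => M.k (ω m)) n u := by
    ext x
    simp only [pcyl, Set.mem_inter_iff, Set.mem_preimage, Set.mem_setOf_eq]
    constructor
    · rintro ⟨h1, h2⟩
      refine ⟨?_, h2⟩
      show M.lamProd ω n * M.codingMap (shiftN n ω) (fun m => x (m + n)) + M.finCode ω n u ∈ s
      rw [← codingMap_split ω n u x h2]
      exact h1
    · rintro ⟨h1, h2⟩
      exact ⟨by rw [codingMap_split ω n u x h2]; exact h1, h2⟩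
  rw [hsplitset]
  refine (Measure.restrict_apply ((tail_measurable M ω n) hB)).symm.trans ?_
  refine (Measure.map_apply (tail_measurable M ω n) hB).symm.trans ?_
  rw [prod_measure_tail ω n hμ hμ' u]
  rw [Measure.smul_apply, smul_eq_mul, Measure.smul_apply, smul_eq_mul]
  rw [Measure.map_apply (measurable_affine _ _) hs, hmap',
    Measure.map_apply (measurable_codingMap M (shiftN n ω)) ((measurable_affine _ _) hs)]
  rw [ENNReal.ofReal_prod_of_nonneg (fun j _ => (M.p_pos _ _).le)]


end PlanarModel
end SSmodel
namespace SSmodel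

lemma measurableSet_cell2 (n : ℕ) (a : ℤ × ℤ) : MeasurableSet (cell2 n a) := by
  have : cell2 n a =
      ((fun z : ℂ => (2:ℝ)^n * z.re) ⁻¹' (Set.Ico (a.1:ℝ) ((a.1:ℝ)+1))) ∩
      ((fun z : ℂ => (2:ℝ)^n * z.im) ⁻¹' (Set.Ico (a.2:ℝ) ((a.2:ℝ)+1))) := by
    ext z
    simp only [cell2, Set.mem_setOf_eq, Set.mem_inter_iff, Set.mem_preimage, Set.mem_Ico]
    tauto
  rw [this]
  exact (((continuous_const.mul Complex.continuous_re).measurable) measurableSet_Ico).inter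
    (((continuous_const.mul Complex.continuous_im).measurable) measurableSet_Ico)

lemma mem_cell2_cellIdx (kk : ℕ) (x : ℂ) : x ∈ cell2 kk (cellIdx kk x) :=
  ⟨Int.floor_le _, Int.lt_floor_add_one _, Int.floor_le _, Int.lt_floor_add_one _⟩

lemma cellIdx_eq_of_mem {kk : ℕ} {x : ℂ} {a : ℤ × ℤ} (h : x ∈ cell2 kk a) :
    cellIdx kk x = a := by
  obtain ⟨h1, h2, h3, h4⟩ := h
  have e1 : ⌊(2:ℝ)^kk * x.re⌋ = a.1 := Int.floor_eq_iff.mpr ⟨h1, h2⟩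
  have e2 : ⌊(2:ℝ)^kk * x.im⌋ = a.2 := Int.floor_eq_iff.mpr ⟨h3, h4⟩
  rw [cellIdx, e1, e2]

/-- Vertical strip around the line re = m·2^{-kk}, of half-width 3δ. -/
def stripV (kk : ℕ) (δ : ℝ) (m : ℤ) : Set ℂ := {z | |z.re - (m : ℝ) * ((2:ℝ)^kk)⁻¹| < 3*δ}

/-- Horizontal strip. -/
def stripH (kk : ℕ) (δ : ℝ) (m : ℤ) : Set ℂ := {z | |z.im - (m : ℝ) * ((2:ℝ)^kk)⁻¹| < 3*δ}

/-- The four boundary strips of the cell with index a. -/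
def stripA (kk : ℕ) (δ : ℝ) (a : ℤ × ℤ) : Set ℂ :=
  stripV kk δ a.1 ∪ stripV kk δ (a.1+1) ∪ stripH kk δ a.2 ∪ stripH kk δ (a.2+1)

lemma measurableSet_stripV (kk : ℕ) (δ : ℝ) (m : ℤ) : MeasurableSet (stripV kk δ m) :=
  ((Complex.continuous_re.sub continuous_const).abs.measurable) measurableSet_Iio

lemma measurableSet_stripH (kk : ℕ) (δ : ℝ) (m : ℤ) : MeasurableSet (stripH kk δ m) :=
  ((Complex.continuous_im.sub continuous_const).abs.measurable) measurableSet_Iio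

lemma measurableSet_stripA (kk : ℕ) (δ : ℝ) (a : ℤ × ℤ) : MeasurableSet (stripA kk δ a) :=
  (((measurableSet_stripV kk δ a.1).union (measurableSet_stripV kk δ (a.1+1))).union
    (measurableSet_stripH kk δ a.2)).union (measurableSet_stripH kk δ (a.2+1))

lemma near_boundary {kk : ℕ} {δ : ℝ} (hδ : 0 < δ) {a : ℤ × ℤ} {z q : ℂ}
    (hz : z ∈ cell2 kk a) (hq : q ∉ cell2 kk a) (hd : ‖z - q‖ ≤ 2*δ) :
    z ∈ stripA kk δ a := by
  obtain ⟨h1, h2, h3, h4⟩ := hz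
  have hre : |z.re - q.re| ≤ 2*δ := by
    rw [← Complex.sub_re]; exact le_trans (Complex.abs_re_le_norm _) hd
  have him : |z.im - q.im| ≤ 2*δ := by
    rw [← Complex.sub_im]; exact le_trans (Complex.abs_im_le_norm _) hd
  have hre1 := (abs_le.mp hre).1
  have hre2 := (abs_le.mp hre).2
  have him1 := (abs_le.mp him).1
  have him2 := (abs_le.mp him).2
  have hpow : (0:ℝ) < 2^kk := by positivity
  have hinv : (0:ℝ) < ((2:ℝ)^kk)⁻¹ := by positivity
  have hcan : (2:ℝ)^kk * ((2:ℝ)^kk)⁻¹ = 1 := mul_inv_cancel₀ (ne_of_gt hpow)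
  by_cases hA : ((a.1:ℝ)) ≤ 2^kk * q.re
  · by_cases hB : 2^kk * q.re < (a.1:ℝ)+1
    · by_cases hC : ((a.2:ℝ)) ≤ 2^kk * q.im
      · by_cases hD : 2^kk * q.im < (a.2:ℝ)+1
        · exact absurd ⟨hA, hB, hC, hD⟩ hq
        · -- a.2 + 1 ≤ 2^kk q.im : bottom of H (a.2+1)
          refine Or.inr ?_
          show |z.im - ((a.2+1 : ℤ) : ℝ) * ((2:ℝ)^kk)⁻¹| < 3*δ
          push_neg at hD
          have e1 : z.im < ((a.2:ℝ)+1) * ((2:ℝ)^kk)⁻¹ := by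
            have := mul_lt_mul_of_pos_right h4 hinv
            rw [mul_comm ((2:ℝ)^kk) z.im, mul_assoc, hcan, mul_one] at this
            exact this
          have e2 : ((a.2:ℝ)+1) * ((2:ℝ)^kk)⁻¹ ≤ q.im := by
            have := mul_le_mul_of_nonneg_right hD hinv.le
            rw [mul_comm ((2:ℝ)^kk) q.im, mul_assoc, hcan, mul_one] at this
            exact this
          rw [abs_lt]
          push_cast
          constructor <;> nlinarith
      · -- 2^kk q.im < a.2 : H (a.2)
        refine Or.inl (Or.inr ?_)
        show |z.im - ((a.2 : ℤ) : ℝ) * ((2:ℝ)^kk)⁻¹| < 3*δ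
        push_neg at hC
        have e1 : ((a.2:ℝ)) * ((2:ℝ)^kk)⁻¹ ≤ z.im := by
          have := mul_le_mul_of_nonneg_right h3 hinv.le
          rw [mul_comm ((2:ℝ)^kk) z.im, mul_assoc, hcan, mul_one] at this
          exact this
        have e2 : q.im < ((a.2:ℝ)) * ((2:ℝ)^kk)⁻¹ := by
          have := mul_lt_mul_of_pos_right hC hinv
          rw [mul_comm ((2:ℝ)^kk) q.im, mul_assoc, hcan, mul_one] at this
          exact this
        rw [abs_lt]
        constructor <;> nlinarith
    · -- a.1 + 1 ≤ 2^kk q.re : V (a.1+1)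
      refine Or.inl (Or.inl (Or.inr ?_))
      show |z.re - ((a.1+1 : ℤ) : ℝ) * ((2:ℝ)^kk)⁻¹| < 3*δ
      push_neg at hB
      have e1 : z.re < ((a.1:ℝ)+1) * ((2:ℝ)^kk)⁻¹ := by
        have := mul_lt_mul_of_pos_right h2 hinv
        rw [mul_comm ((2:ℝ)^kk) z.re, mul_assoc, hcan, mul_one] at this
        exact this
      have e2 : ((a.1:ℝ)+1) * ((2:ℝ)^kk)⁻¹ ≤ q.re := by
        have := mul_le_mul_of_nonneg_right hB hinv.le
        rw [mul_comm ((2:ℝ)^kk) q.re, mul_assoc, hcan, mul_one] at this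
        exact this
      rw [abs_lt]
      push_cast
      constructor <;> nlinarith
  · -- 2^kk q.re < a.1 : V (a.1)
    refine Or.inl (Or.inl (Or.inl ?_))
    show |z.re - ((a.1 : ℤ) : ℝ) * ((2:ℝ)^kk)⁻¹| < 3*δ
    push_neg at hA
    have e1 : ((a.1:ℝ)) * ((2:ℝ)^kk)⁻¹ ≤ z.re := by
      have := mul_le_mul_of_nonneg_right h1 hinv.le
      rw [mul_comm ((2:ℝ)^kk) z.re, mul_assoc, hcan, mul_one] at this
      exact this
    have e2 : q.re < ((a.1:ℝ)) * ((2:ℝ)^kk)⁻¹ := by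
      have := mul_lt_mul_of_pos_right hA hinv
      rw [mul_comm ((2:ℝ)^kk) q.re, mul_assoc, hcan, mul_one] at this
      exact this
    rw [abs_lt]
    constructor <;> nlinarith

end SSmodel
namespace SSmodel

lemma frostman_stripV {μ : Measure ℂ} {C ρ : ℝ} (hF : FrostmanOnTubes μ C ρ)
    (c w : ℝ) (hw : 0 < w) (P t : ℂ) (hP : P ≠ 0) :
    μ ((fun z => P * z + t) ⁻¹' {z : ℂ | |z.re - c| < w}) ≤
      ENNReal.ofReal (C * (w / ‖P‖) ^ ρ) := by
  have haP0 : (0:ℝ) < ‖P‖ := norm_pos_iff.mpr hP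
  set aP : ℝ := ‖P‖ with haP
  have haPne : (aP : ℂ) ≠ 0 := by
    simp only [Ne, Complex.ofReal_eq_zero]
    exact ne_of_gt haP0
  set w₀ : ℂ := (starRingEnd ℂ) (Complex.I * P) / (aP : ℂ) with hw₀def
  have hw₀ : ‖w₀‖ = 1 := by
    rw [hw₀def, norm_div, Complex.norm_conj, norm_mul, Complex.norm_I, one_mul,
      Complex.norm_real, Real.norm_eq_abs, abs_of_pos haP0, ← haP, div_self (ne_of_gt haP0)]
  set x₀ : ℂ := ((c : ℂ) - t) / P with hx₀def
  have hkey : ∀ y : ℂ, ((y - x₀) * (starRingEnd ℂ) w₀).im = ((P*y + t).re - c) / aP := by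
    intro y
    have h1 : (starRingEnd ℂ) w₀ = Complex.I * P / (aP:ℂ) := by
      rw [hw₀def, map_div₀, Complex.conj_conj, Complex.conj_ofReal]
    rw [h1]
    have h2 : (y - x₀) * (Complex.I * P / (aP:ℂ)) = (Complex.I * (P*y + t - (c:ℂ))) / (aP:ℂ) := by
      rw [hx₀def]
      field_simp
      ring
    rw [h2, Complex.div_ofReal_im]
    congr 1
    simp [Complex.sub_re, Complex.add_re, Complex.ofReal_re]
  have hset : (fun z => P * z + t) ⁻¹' {z : ℂ | |z.re - c| < w} =
      {z : ℂ | |((z - x₀) * (starRingEnd ℂ) w₀).im| < w / aP} := by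
    ext y
    simp only [Set.mem_preimage, Set.mem_setOf_eq, hkey y]
    rw [abs_div, abs_of_pos haP0]
    exact (div_lt_div_iff_of_pos_right haP0).symm
  rw [hset]
  exact hF w₀ hw₀ x₀ (w / aP) (by positivity)

lemma frostman_stripH {μ : Measure ℂ} {C ρ : ℝ} (hF : FrostmanOnTubes μ C ρ)
    (c w : ℝ) (hw : 0 < w) (P t : ℂ) (hP : P ≠ 0) :
    μ ((fun z => P * z + t) ⁻¹' {z : ℂ | |z.im - c| < w}) ≤
      ENNReal.ofReal (C * (w / ‖P‖) ^ ρ) := by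
  have haP0 : (0:ℝ) < ‖P‖ := norm_pos_iff.mpr hP
  set aP : ℝ := ‖P‖ with haP
  have haPne : (aP : ℂ) ≠ 0 := by
    simp only [Ne, Complex.ofReal_eq_zero]
    exact ne_of_gt haP0
  set w₀ : ℂ := (starRingEnd ℂ) P / (aP : ℂ) with hw₀def
  have hw₀ : ‖w₀‖ = 1 := by
    rw [hw₀def, norm_div, Complex.norm_conj, Complex.norm_real, Real.norm_eq_abs, abs_of_pos haP0, ← haP,
      div_self (ne_of_gt haP0)]
  set x₀ : ℂ := ((c : ℂ) * Complex.I - t) / P with hx₀def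
  have hkey : ∀ y : ℂ, ((y - x₀) * (starRingEnd ℂ) w₀).im = ((P*y + t).im - c) / aP := by
    intro y
    have h1 : (starRingEnd ℂ) w₀ = P / (aP:ℂ) := by
      rw [hw₀def, map_div₀, Complex.conj_conj, Complex.conj_ofReal]
    rw [h1]
    have h2 : (y - x₀) * (P / (aP:ℂ)) = (P*y + t - (c:ℂ) * Complex.I) / (aP:ℂ) := by
      rw [hx₀def]
      field_simp
      ring
    rw [h2, Complex.div_ofReal_im]
    congr 1
    simp [Complex.sub_im, Complex.add_im, Complex.mul_im]
  have hset : (fun z => P * z + t) ⁻¹' {z : ℂ | |z.im - c| < w} =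
      {z : ℂ | |((z - x₀) * (starRingEnd ℂ) w₀).im| < w / aP} := by
    ext y
    simp only [Set.mem_preimage, Set.mem_setOf_eq, hkey y]
    rw [abs_div, abs_of_pos haP0]
    exact (div_lt_div_iff_of_pos_right haP0).symm
  rw [hset]
  exact hF w₀ hw₀ x₀ (w / aP) (by positivity)

end SSmodel
namespace SSmodel
namespace PlanarModel

variable {I : Type} [Fintype I] [MeasurableSpace I] {M : PlanarModel I} {R : ℝ}
variable {η : (ℕ → I) → Measure ℂ}

lemma eta_apply (hη : M.IsCodingFamily η) (ω : ℕ → I) (n : ℕ) {s : Set ℂ}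
    (hs : MeasurableSet s) :
    η ω s = ∑ u : ∀ j : Fin n, Fin (M.k (ω j.val)),
      ENNReal.ofReal (∏ j : Fin n, M.p (ω j.val) (u j)) *
        (η (shiftN n ω)) ((fun z => M.lamProd ω n * z + M.finCode ω n u) ⁻¹' s) := by
  conv_lhs => rw [eta_decomp hη ω n]
  rw [Measure.finset_sum_apply]
  apply Finset.sum_congr rfl
  intro u _
  rw [Measure.smul_apply, smul_eq_mul, Measure.map_apply (measurable_affine _ _) hs]

lemma sum_weights_one (M : PlanarModel I) (ω : ℕ → I) (n : ℕ) :
    (∑ u : ∀ j : Fin n, Fin (M.k (ω j.val)),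
      ENNReal.ofReal (∏ j : Fin n, M.p (ω j.val) (u j))) = 1 := by
  have h1 : ∀ u : ∀ j : Fin n, Fin (M.k (ω j.val)),
      ENNReal.ofReal (∏ j : Fin n, M.p (ω j.val) (u j))
        = ∏ j : Fin n, ENNReal.ofReal (M.p (ω j.val) (u j)) :=
    fun u => ENNReal.ofReal_prod_of_nonneg (fun j _ => (M.p_pos _ _).le)
  rw [Finset.sum_congr rfl (fun u _ => h1 u)]
  rw [← Fintype.piFinset_univ,
    ← Finset.prod_univ_sum (fun _ : Fin n => Finset.univ)
      (fun (j : Fin n) (t : Fin (M.k (ω j.val))) => ENNReal.ofReal (M.p (ω j.val) t))]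
  have h2 : ∀ j : Fin n, (∑ t : Fin (M.k (ω j.val)), ENNReal.ofReal (M.p (ω j.val) t)) = 1 := by
    intro j
    rw [← ENNReal.ofReal_sum_of_nonneg (fun t _ => (M.p_pos _ _).le), M.p_sum, ENNReal.ofReal_one]
  rw [Finset.prod_congr rfl (fun j _ => h2 j), Finset.prod_const_one]

end PlanarModel

lemma truncSum_apply {I : Type} [Fintype I] [MeasurableSpace I] (M : PlanarModel I)
    (η : (ℕ → I) → Measure ℂ) (R : ℝ) (ω : ℕ → I) (n kk : ℕ) (x : ℂ) {s : Set ℂ}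
    (hs : MeasurableSet s) :
    truncSum M η R ω n kk x s = ∑ u : ∀ j : Fin n, Fin (M.k (ω j.val)),
      if ∀ z : ℂ, ‖z‖ ≤ R → M.lamProd ω n * z + M.finCode ω n u ∈ dyadicCellOf kk x
      then ENNReal.ofReal (∏ j : Fin n, M.p (ω j.val) (u j)) *
        (η (shiftN n ω)) ((fun z => M.lamProd ω n * z + M.finCode ω n u) ⁻¹' s)
      else 0 := by
  rw [truncSum, Measure.finset_sum_apply]
  apply Finset.sum_congr rfl
  intro u _
  split_ifs with h
  · rw [Measure.smul_apply, smul_eq_mul,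
      Measure.map_apply (PlanarModel.measurable_affine _ _) hs]
  · rfl

end SSmodel
namespace SSmodel
open PlanarModel

set_option maxHeartbeats 1000000 in
lemma trunc_close {I : Type} [Fintype I] [MeasurableSpace I] {M : PlanarModel I}
    {η : (ℕ → I) → Measure ℂ} {R : ℝ}
    (hη : M.IsCodingFamily η) (hR : M.GoodRadius R) (ω : ℕ → I) (n kk : ℕ) (x : ℂ)
    {ε : ℝ} (hε : 0 < ε) (hε2 : ε ≤ 2⁻¹)
    (ha0 : η ω (dyadicCellOf kk x) ≠ 0)
    (hd : η ω (stripA kk (R * ‖M.lamProd ω n‖) (cellIdx kk x) ∩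
            cell2 kk (cellIdx kk x))
          < ENNReal.ofReal (ε/2) * η ω (dyadicCellOf kk x)) :
    dTV (rawComponent (η ω) kk x) (truncComponent M η R ω n kk x) < ε := by
  haveI hPω : IsProbabilityMeasure (η ω) := eta_prob hη ω
  haveI hP' : IsProbabilityMeasure (η (shiftN n ω)) := eta_prob hη (shiftN n ω)
  set δ : ℝ := R * ‖M.lamProd ω n‖ with hδdef
  have hlamne : M.lamProd ω n ≠ 0 := by
    rw [lamProd]; exact Finset.prod_ne_zero_iff.mpr fun i _ => M.lam_ne (ω i)
  have hδ0 : 0 < δ := mul_pos hR.1 (norm_pos_iff.mpr hlamne)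
  have hDmeas : MeasurableSet (dyadicCellOf kk x) := measurableSet_cell2 kk (cellIdx kk x)
  have hSmeas : MeasurableSet (stripA kk δ (cellIdx kk x) ∩ cell2 kk (cellIdx kk x)) :=
    (measurableSet_stripA _ _ _).inter (measurableSet_cell2 _ _)
  -- key per-word facts
  have hcond_eq : ∀ (u : (j : Fin n) → Fin (M.k (ω j.val))),
      (∀ z : ℂ, ‖z‖ ≤ R → M.lamProd ω n * z + M.finCode ω n u ∈ dyadicCellOf kk x) →
      ∀ s : Set ℂ, MeasurableSet s →
      (η (shiftN n ω)) ((fun z => M.lamProd ω n * z + M.finCode ω n u) ⁻¹' s)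
        = (η (shiftN n ω)) ((fun z => M.lamProd ω n * z + M.finCode ω n u) ⁻¹'
            (s ∩ dyadicCellOf kk x)) := by
    intro u hu s _
    have hnull : (η (shiftN n ω)) ((fun z => M.lamProd ω n * z + M.finCode ω n u) ⁻¹'
        (s \ dyadicCellOf kk x)) = 0 := by
      apply measure_mono_null ?_ (eta_outside hη hR (shiftN n ω))
      intro y hy
      simp only [Set.mem_preimage, Set.mem_diff] at hy
      by_contra hyR
      simp only [Set.mem_setOf_eq, not_lt] at hyR
      exact hy.2 (hu y hyR)
    apply le_antisymm
    · have hsplit : (fun z => M.lamProd ω n * z + M.finCode ω n u) ⁻¹' s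
          = (fun z => M.lamProd ω n * z + M.finCode ω n u) ⁻¹' (s ∩ dyadicCellOf kk x)
            ∪ (fun z => M.lamProd ω n * z + M.finCode ω n u) ⁻¹' (s \ dyadicCellOf kk x) := by
        rw [← Set.preimage_union, Set.inter_union_diff]
      rw [hsplit]
      exact le_trans (measure_union_le _ _) (by rw [hnull, add_zero])
    · exact measure_mono (Set.preimage_mono Set.inter_subset_left)
  have hcond_D : ∀ (u : (j : Fin n) → Fin (M.k (ω j.val))),
      (∀ z : ℂ, ‖z‖ ≤ R → M.lamProd ω n * z + M.finCode ω n u ∈ dyadicCellOf kk x) →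
      (η (shiftN n ω)) ((fun z => M.lamProd ω n * z + M.finCode ω n u) ⁻¹'
        (dyadicCellOf kk x)) = 1 := by
    intro u hu
    exact measure_superset_ball_eq_one hη hR (shiftN n ω) (fun z hz => hu z hz)
  have hncond : ∀ (u : (j : Fin n) → Fin (M.k (ω j.val))),
      ¬(∀ z : ℂ, ‖z‖ ≤ R → M.lamProd ω n * z + M.finCode ω n u ∈ dyadicCellOf kk x) →
      (η (shiftN n ω)) ((fun z => M.lamProd ω n * z + M.finCode ω n u) ⁻¹'
          (dyadicCellOf kk x))
        ≤ (η (shiftN n ω)) ((fun z => M.lamProd ω n * z + M.finCode ω n u) ⁻¹'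
          (stripA kk δ (cellIdx kk x) ∩ cell2 kk (cellIdx kk x))) := by
    intro u hu
    push_neg at hu
    obtain ⟨z₀, hz₀R, hz₀D⟩ := hu
    have hsub : ((fun z => M.lamProd ω n * z + M.finCode ω n u) ⁻¹' (dyadicCellOf kk x))
        ⊆ ((fun z => M.lamProd ω n * z + M.finCode ω n u) ⁻¹'
            (stripA kk δ (cellIdx kk x) ∩ cell2 kk (cellIdx kk x)))
          ∪ {z : ℂ | R < ‖z‖} := by
      intro y hy
      rcases le_or_gt (‖y‖) R with hyR | hyR
      · left
        simp only [Set.mem_preimage] at hy ⊢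
        have hycell : M.lamProd ω n * y + M.finCode ω n u ∈ cell2 kk (cellIdx kk x) := hy
        have hz₀D' : M.lamProd ω n * z₀ + M.finCode ω n u ∉ cell2 kk (cellIdx kk x) := hz₀D
        have hdist : ‖(M.lamProd ω n * y + M.finCode ω n u)
            - (M.lamProd ω n * z₀ + M.finCode ω n u)‖ ≤ 2 * δ := by
          have e : (M.lamProd ω n * y + M.finCode ω n u)
              - (M.lamProd ω n * z₀ + M.finCode ω n u) = M.lamProd ω n * (y - z₀) := by ring
          rw [e, norm_mul]
          have habs : ‖y - z₀‖ ≤ 2 * R := by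
            calc ‖y - z₀‖ ≤ ‖y‖ + ‖z₀‖ := by
                  simpa using norm_sub_le y z₀
              _ ≤ 2 * R := by linarith
          calc ‖M.lamProd ω n‖ * ‖y - z₀‖
              ≤ ‖M.lamProd ω n‖ * (2*R) :=
                mul_le_mul_of_nonneg_left habs (norm_nonneg _)
            _ = 2 * δ := by rw [hδdef]; ring
        exact ⟨near_boundary hδ0 hycell hz₀D' hdist, hycell⟩
      · right; exact hyR
    calc (η (shiftN n ω)) ((fun z => M.lamProd ω n * z + M.finCode ω n u) ⁻¹'
          (dyadicCellOf kk x))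
        ≤ (η (shiftN n ω)) (((fun z => M.lamProd ω n * z + M.finCode ω n u) ⁻¹'
            (stripA kk δ (cellIdx kk x) ∩ cell2 kk (cellIdx kk x)))
          ∪ {z : ℂ | R < ‖z‖}) := measure_mono hsub
      _ ≤ (η (shiftN n ω)) ((fun z => M.lamProd ω n * z + M.finCode ω n u) ⁻¹'
            (stripA kk δ (cellIdx kk x) ∩ cell2 kk (cellIdx kk x)))
          + (η (shiftN n ω)) {z : ℂ | R < ‖z‖} := measure_union_le _ _
      _ = _ := by rw [eta_outside hη hR, add_zero]
  -- ENNReal-valued quantities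
  have haE : η ω (dyadicCellOf kk x) = ∑ u : (j : Fin n) → Fin (M.k (ω j.val)),
      ENNReal.ofReal (∏ j : Fin n, M.p (ω j.val) (u j)) *
        (η (shiftN n ω)) ((fun z => M.lamProd ω n * z + M.finCode ω n u) ⁻¹'
          (dyadicCellOf kk x)) := eta_apply hη ω n hDmeas
  have hbE : truncSum M η R ω n kk x Set.univ = ∑ u : (j : Fin n) → Fin (M.k (ω j.val)),
      if ∀ z : ℂ, ‖z‖ ≤ R → M.lamProd ω n * z + M.finCode ω n u ∈ dyadicCellOf kk x
      then ENNReal.ofReal (∏ j : Fin n, M.p (ω j.val) (u j)) else 0 := by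
    rw [truncSum_apply M η R ω n kk x MeasurableSet.univ]
    apply Finset.sum_congr rfl
    intro u _
    split_ifs with h
    · rw [Set.preimage_univ, measure_univ, mul_one]
    · rfl
  have haEsplit : η ω (dyadicCellOf kk x) = truncSum M η R ω n kk x Set.univ
      + ∑ u : (j : Fin n) → Fin (M.k (ω j.val)),
        (if ∀ z : ℂ, ‖z‖ ≤ R →
            M.lamProd ω n * z + M.finCode ω n u ∈ dyadicCellOf kk x
        then 0 else ENNReal.ofReal (∏ j : Fin n, M.p (ω j.val) (u j)) *
          (η (shiftN n ω)) ((fun z => M.lamProd ω n * z + M.finCode ω n u) ⁻¹'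
            (dyadicCellOf kk x))) := by
    rw [haE, hbE, ← Finset.sum_add_distrib]
    apply Finset.sum_congr rfl
    intro u _
    split_ifs with h
    · rw [hcond_D u h, mul_one, add_zero]
    · rw [zero_add]
  have hrE_le : (∑ u : (j : Fin n) → Fin (M.k (ω j.val)),
        (if ∀ z : ℂ, ‖z‖ ≤ R →
            M.lamProd ω n * z + M.finCode ω n u ∈ dyadicCellOf kk x
        then 0 else ENNReal.ofReal (∏ j : Fin n, M.p (ω j.val) (u j)) *
          (η (shiftN n ω)) ((fun z => M.lamProd ω n * z + M.finCode ω n u) ⁻¹'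
            (dyadicCellOf kk x))))
      ≤ η ω (stripA kk δ (cellIdx kk x) ∩ cell2 kk (cellIdx kk x)) := by
    rw [eta_apply hη ω n hSmeas]
    apply Finset.sum_le_sum
    intro u _
    split_ifs with h
    · exact zero_le
    · exact mul_le_mul_right (hncond u h) _
  -- finiteness and real versions
  have haEne : η ω (dyadicCellOf kk x) ≠ ⊤ := measure_ne_top _ _
  have hdEne : η ω (stripA kk δ (cellIdx kk x) ∩ cell2 kk (cellIdx kk x)) ≠ ⊤ :=
    measure_ne_top _ _
  have hrEne : (∑ u : (j : Fin n) → Fin (M.k (ω j.val)),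
        (if ∀ z : ℂ, ‖z‖ ≤ R →
            M.lamProd ω n * z + M.finCode ω n u ∈ dyadicCellOf kk x
        then 0 else ENNReal.ofReal (∏ j : Fin n, M.p (ω j.val) (u j)) *
          (η (shiftN n ω)) ((fun z => M.lamProd ω n * z + M.finCode ω n u) ⁻¹'
            (dyadicCellOf kk x)))) ≠ ⊤ :=
    ne_top_of_le_ne_top hdEne hrE_le
  have hbEne : truncSum M η R ω n kk x Set.univ ≠ ⊤ := by
    apply ne_top_of_le_ne_top haEne
    rw [haEsplit]
    exact le_self_add
  set A : ℝ := (η ω (dyadicCellOf kk x)).toReal with hAdef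
  set B : ℝ := (truncSum M η R ω n kk x Set.univ).toReal with hBdef
  set Dd : ℝ := (η ω (stripA kk δ (cellIdx kk x) ∩ cell2 kk (cellIdx kk x))).toReal with hDddef
  set RE : ℝ := ((∑ u : (j : Fin n) → Fin (M.k (ω j.val)),
        (if ∀ z : ℂ, ‖z‖ ≤ R →
            M.lamProd ω n * z + M.finCode ω n u ∈ dyadicCellOf kk x
        then 0 else ENNReal.ofReal (∏ j : Fin n, M.p (ω j.val) (u j)) *
          (η (shiftN n ω)) ((fun z => M.lamProd ω n * z + M.finCode ω n u) ⁻¹'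
            (dyadicCellOf kk x))))).toReal with hREdef
  have hA0 : 0 < A := ENNReal.toReal_pos ha0 haEne
  have hAsplit : A = B + RE := by
    rw [hAdef, hBdef, hREdef, haEsplit, ENNReal.toReal_add hbEne hrEne]
  have hRE0 : 0 ≤ RE := ENNReal.toReal_nonneg
  have hDd0 : 0 ≤ Dd := ENNReal.toReal_nonneg
  have hB0' : 0 ≤ B := ENNReal.toReal_nonneg
  have hRE_Dd : RE ≤ Dd := ENNReal.toReal_mono hdEne hrE_le
  have hDdlt : Dd < ε/2 * A := by
    have h2 : (ENNReal.ofReal (ε/2) * η ω (dyadicCellOf kk x)).toReal = ε/2 * A := by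
      rw [ENNReal.toReal_mul, ENNReal.toReal_ofReal (by linarith)]
    rw [← h2]
    exact (ENNReal.toReal_lt_toReal hdEne (ENNReal.mul_ne_top ENNReal.ofReal_ne_top haEne)).mpr hd
  have hBA : B ≤ A := by linarith
  have hB0 : 0 < B := by nlinarith
  -- the per-set bound
  haveI : Nonempty {s : Set ℂ // MeasurableSet s} := ⟨⟨∅, MeasurableSet.empty⟩⟩
  have hbound : ∀ s : {s : Set ℂ // MeasurableSet s},
      |(rawComponent (η ω) kk x s.1).toReal - (truncComponent M η R ω n kk x s.1).toReal|
        ≤ 2 * Dd / A := by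
    rintro ⟨s, hs⟩
    have hmsplit : η ω (s ∩ dyadicCellOf kk x) = truncSum M η R ω n kk x s
        + ∑ u : (j : Fin n) → Fin (M.k (ω j.val)),
          (if ∀ z : ℂ, ‖z‖ ≤ R →
              M.lamProd ω n * z + M.finCode ω n u ∈ dyadicCellOf kk x
          then 0 else ENNReal.ofReal (∏ j : Fin n, M.p (ω j.val) (u j)) *
            (η (shiftN n ω)) ((fun z => M.lamProd ω n * z + M.finCode ω n u) ⁻¹'
              (s ∩ dyadicCellOf kk x))) := by
      rw [eta_apply hη ω n (hs.inter hDmeas), truncSum_apply M η R ω n kk x hs,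
        ← Finset.sum_add_distrib]
      apply Finset.sum_congr rfl
      intro u _
      split_ifs with h
      · rw [hcond_eq u h s hs, add_zero]
      · rw [zero_add]
    have hrest_le : (∑ u : (j : Fin n) → Fin (M.k (ω j.val)),
          (if ∀ z : ℂ, ‖z‖ ≤ R →
              M.lamProd ω n * z + M.finCode ω n u ∈ dyadicCellOf kk x
          then 0 else ENNReal.ofReal (∏ j : Fin n, M.p (ω j.val) (u j)) *
            (η (shiftN n ω)) ((fun z => M.lamProd ω n * z + M.finCode ω n u) ⁻¹'
              (s ∩ dyadicCellOf kk x))))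
        ≤ ∑ u : (j : Fin n) → Fin (M.k (ω j.val)),
          (if ∀ z : ℂ, ‖z‖ ≤ R →
              M.lamProd ω n * z + M.finCode ω n u ∈ dyadicCellOf kk x
          then 0 else ENNReal.ofReal (∏ j : Fin n, M.p (ω j.val) (u j)) *
            (η (shiftN n ω)) ((fun z => M.lamProd ω n * z + M.finCode ω n u) ⁻¹'
              (dyadicCellOf kk x))) := by
      apply Finset.sum_le_sum
      intro u _
      split_ifs with h
      · exact le_rfl
      · exact mul_le_mul_right
          (measure_mono (Set.preimage_mono Set.inter_subset_right)) _
    have ht_le : truncSum M η R ω n kk x s ≤ truncSum M η R ω n kk x Set.univ := by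
      rw [truncSum_apply M η R ω n kk x hs, hbE]
      apply Finset.sum_le_sum
      intro u _
      split_ifs with h
      · exact le_trans (mul_le_mul_right prob_le_one _) (by rw [mul_one])
      · exact le_rfl
    have hmE_ne : η ω (s ∩ dyadicCellOf kk x) ≠ ⊤ := measure_ne_top _ _
    have htE_ne : truncSum M η R ω n kk x s ≠ ⊤ := ne_top_of_le_ne_top hbEne ht_le
    have hrest_ne : (∑ u : (j : Fin n) → Fin (M.k (ω j.val)),
          (if ∀ z : ℂ, ‖z‖ ≤ R →
              M.lamProd ω n * z + M.finCode ω n u ∈ dyadicCellOf kk x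
          then 0 else ENNReal.ofReal (∏ j : Fin n, M.p (ω j.val) (u j)) *
            (η (shiftN n ω)) ((fun z => M.lamProd ω n * z + M.finCode ω n u) ⁻¹'
              (s ∩ dyadicCellOf kk x)))) ≠ ⊤ := ne_top_of_le_ne_top hrEne hrest_le
    set Ms : ℝ := (η ω (s ∩ dyadicCellOf kk x)).toReal with hMsdef
    set Ts : ℝ := (truncSum M η R ω n kk x s).toReal with hTsdef
    set Rs : ℝ := ((∑ u : (j : Fin n) → Fin (M.k (ω j.val)),
          (if ∀ z : ℂ, ‖z‖ ≤ R →
              M.lamProd ω n * z + M.finCode ω n u ∈ dyadicCellOf kk x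
          then 0 else ENNReal.ofReal (∏ j : Fin n, M.p (ω j.val) (u j)) *
            (η (shiftN n ω)) ((fun z => M.lamProd ω n * z + M.finCode ω n u) ⁻¹'
              (s ∩ dyadicCellOf kk x))))).toReal with hRsdef
    have hMeq : Ms = Ts + Rs := by
      rw [hMsdef, hTsdef, hRsdef, hmsplit, ENNReal.toReal_add htE_ne hrest_ne]
    have hRs_le : Rs ≤ RE := ENNReal.toReal_mono hrEne hrest_le
    have hTs_le : Ts ≤ B := ENNReal.toReal_mono hbEne ht_le
    have hTs0 : 0 ≤ Ts := ENNReal.toReal_nonneg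
    have hRs0 : 0 ≤ Rs := ENNReal.toReal_nonneg
    have hraw : (rawComponent (η ω) kk x s).toReal = Ms / A := by
      rw [rawComponent, Measure.smul_apply, smul_eq_mul, Measure.restrict_apply hs,
        ENNReal.toReal_mul, ENNReal.toReal_inv, inv_mul_eq_div]
    have htrunc : (truncComponent M η R ω n kk x s).toReal = Ts / B := by
      rw [truncComponent, Measure.smul_apply, smul_eq_mul,
        ENNReal.toReal_mul, ENNReal.toReal_inv, inv_mul_eq_div]
    rw [hraw, htrunc, abs_sub_le_iff]
    have h3 : 2 * Dd / A = Dd / A + Dd / A := by ring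
    have key1 : Ms / A ≤ (Ts + Dd) / A := by gcongr; linarith
    have key1b : Ts / A ≤ Ts / B := by gcongr
    have key2 : Ts / B - Ts / A ≤ (A - B) / A := by
      rw [div_sub_div _ _ (ne_of_gt hB0) (ne_of_gt hA0),
        div_le_div_iff₀ (mul_pos hB0 hA0) hA0]
      nlinarith [mul_nonneg (mul_nonneg hA0.le (sub_nonneg.mpr hBA)) (sub_nonneg.mpr hTs_le)]
    have hDdA : 0 ≤ Dd / A := div_nonneg hDd0 hA0.le
    have hTsMs : Ts / A ≤ Ms / A := by gcongr; linarith
    constructor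
    · have h4 : (Ts + Dd) / A = Ts / A + Dd / A := add_div _ _ _
      have h2 : (A - B) / A ≤ Dd / A := by gcongr; linarith
      linarith
    · have h2 : (A - B) / A ≤ Dd / A := by gcongr; linarith
      linarith
  have hsup : dTV (rawComponent (η ω) kk x) (truncComponent M η R ω n kk x) ≤ 2 * Dd / A := by
    rw [dTV]
    exact ciSup_le hbound
  have hlast : 2 * Dd / A < ε := by
    rw [div_lt_iff₀ hA0]
    linarith
  exact lt_of_le_of_lt hsup hlast

end SSmodel
namespace SSmodel
open PlanarModel

set_option maxHeartbeats 1000000 in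
lemma grid_mass {I : Type} [Fintype I] [MeasurableSpace I] {M : PlanarModel I}
    {η : (ℕ → I) → Measure ℂ} {R : ℝ}
    (hη : M.IsCodingFamily η) (hR : M.GoodRadius R)
    {C ρ q : ℝ} (hC : 0 < C) (hρ : 0 < ρ) (hq0 : 0 < q)
    (hq : ∀ i, ‖M.lam i‖ ≤ q)
    (ω : ℕ → I) (kk k' N : ℕ)
    (hF : FrostmanOnTubes (η (shiftN k' ω)) C ρ)
    (hnp1 : 2 * R * (∏ i ∈ Finset.range k', ‖M.lam (ω i)‖) ≤ ((2:ℝ)^kk)⁻¹)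
    (hqN : q ^ N ≤ 1/3) :
    η ω (⋃ a : ℤ × ℤ, (stripA kk (R * ‖M.lamProd ω (k' + N)‖) a ∩ cell2 kk a))
      ≤ ENNReal.ofReal (4 * (C * (3*R*q^N)^ρ)) := by
  set δ : ℝ := R * ‖M.lamProd ω (k' + N)‖ with hδdef
  have hlamne : ∀ m : ℕ, M.lamProd ω m ≠ 0 := fun m => by
    rw [lamProd]; exact Finset.prod_ne_zero_iff.mpr fun i _ => M.lam_ne (ω i)
  have hδ0 : 0 < δ := mul_pos hR.1 (norm_pos_iff.mpr (hlamne _))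
  have hGmeas : MeasurableSet (⋃ a : ℤ × ℤ, (stripA kk δ a ∩ cell2 kk a)) :=
    MeasurableSet.iUnion fun a => (measurableSet_stripA _ _ _).inter (measurableSet_cell2 _ _)
  rw [eta_apply hη ω k' hGmeas]
  have habsP : ‖M.lamProd ω k'‖
      = ∏ i ∈ Finset.range k', ‖M.lam (ω i)‖ := by
    rw [lamProd]; exact norm_prod _ _
  have haP : 0 < ‖M.lamProd ω k'‖ := norm_pos_iff.mpr (hlamne _)
  have hqN0 : 0 ≤ q ^ N := pow_nonneg hq0.le N
  have hratio : ‖M.lamProd ω (k' + N)‖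
      ≤ ‖M.lamProd ω k'‖ * q ^ N := by
    rw [lamProd, lamProd, norm_prod, norm_prod, Finset.prod_range_add]
    apply mul_le_mul_of_nonneg_left _ (Finset.prod_nonneg fun i _ => norm_nonneg _)
    exact prod_abs_lam_le (fun i => hq i) _ N
  have hcell_small : ‖M.lamProd ω k'‖ * R ≤ ((2:ℝ)^kk)⁻¹ / 2 := by
    rw [habsP]; linarith
  have h3δ : 3 * δ ≤ ((2:ℝ)^kk)⁻¹ / 2 := by
    have h1 : δ ≤ (((2:ℝ)^kk)⁻¹ / 2) * q ^ N := by
      rw [hδdef]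
      calc R * ‖M.lamProd ω (k' + N)‖
          ≤ R * (‖M.lamProd ω k'‖ * q ^ N) :=
            mul_le_mul_of_nonneg_left hratio hR.1.le
        _ = (‖M.lamProd ω k'‖ * R) * q ^ N := by ring
        _ ≤ (((2:ℝ)^kk)⁻¹ / 2) * q ^ N :=
            mul_le_mul_of_nonneg_right hcell_small hqN0
    have hpos : (0:ℝ) < ((2:ℝ)^kk)⁻¹ := by positivity
    nlinarith
  have hW : 3 * δ / ‖M.lamProd ω k'‖ ≤ 3*R*q^N := by
    rw [div_le_iff₀ haP]
    calc 3 * δ = 3 * R * ‖M.lamProd ω (k' + N)‖ := by rw [hδdef]; ring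
      _ ≤ 3 * R * (‖M.lamProd ω k'‖ * q ^ N) := by
          apply mul_le_mul_of_nonneg_left hratio (by linarith [hR.1])
      _ = 3 * R * q ^ N * ‖M.lamProd ω k'‖ := by ring
  have hv : ∀ v : (j : Fin k') → Fin (M.k (ω j.val)),
      (η (shiftN k' ω)) ((fun z => M.lamProd ω k' * z + M.finCode ω k' v) ⁻¹'
          (⋃ a : ℤ × ℤ, (stripA kk δ a ∩ cell2 kk a)))
        ≤ ENNReal.ofReal (4 * (C * (3*R*q^N)^ρ)) := by
    intro v
    set P : ℂ := M.lamProd ω k' with hPdef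
    set t : ℂ := M.finCode ω k' v with htdef
    set h2 : ℝ := ((2:ℝ)^kk)⁻¹ with h2def
    have h2pos : 0 < h2 := by rw [h2def]; positivity
    have h2can : h2 * (2:ℝ)^kk = 1 := by rw [h2def]; field_simp
    set sre : ℝ := t.re * (2:ℝ)^kk with hsredef
    set sim : ℝ := t.im * (2:ℝ)^kk with hsimdef
    -- inclusion into four tubes plus outside-ball
    have hsub : ((fun z => P * z + t) ⁻¹' (⋃ a : ℤ × ℤ, (stripA kk δ a ∩ cell2 kk a)))
        ⊆ ((fun z => P * z + t) ⁻¹' {z : ℂ | |z.re - (⌊sre⌋ : ℝ) * h2| < 3*δ})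
          ∪ (((fun z => P * z + t) ⁻¹' {z : ℂ | |z.re - ((⌊sre⌋+1 : ℤ) : ℝ) * h2| < 3*δ})
          ∪ (((fun z => P * z + t) ⁻¹' {z : ℂ | |z.im - (⌊sim⌋ : ℝ) * h2| < 3*δ})
          ∪ (((fun z => P * z + t) ⁻¹' {z : ℂ | |z.im - ((⌊sim⌋+1 : ℤ) : ℝ) * h2| < 3*δ})
          ∪ {z : ℂ | R < ‖z‖}))) := by
      intro y hy
      rcases le_or_gt (‖y‖) R with hyR | hyR
      swap
      · exact Or.inr (Or.inr (Or.inr (Or.inr hyR)))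
      simp only [Set.mem_preimage, Set.mem_iUnion] at hy
      obtain ⟨a, hstrip, hcell⟩ := hy
      set z : ℂ := P * y + t with hzdef
      have hzt : ‖z - t‖ ≤ h2 / 2 := by
        have e : z - t = P * y := by rw [hzdef]; ring
        rw [e, norm_mul]
        calc ‖P‖ * ‖y‖ ≤ ‖P‖ * R :=
              mul_le_mul_of_nonneg_left hyR (norm_nonneg _)
          _ ≤ h2 / 2 := hcell_small
      have hzre : |z.re - t.re| ≤ h2 / 2 := by
        rw [← Complex.sub_re]; exact le_trans (Complex.abs_re_le_norm _) hzt
      have hzim : |z.im - t.im| ≤ h2 / 2 := by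
        rw [← Complex.sub_im]; exact le_trans (Complex.abs_im_le_norm _) hzt
      have hlocV : ∀ m : ℤ, z ∈ stripV kk δ m → m = ⌊sre⌋ ∨ m = ⌊sre⌋ + 1 := by
        intro m hm
        have hm' : |z.re - (m:ℝ) * h2| < 3*δ := hm
        have hd1 : |(m:ℝ) * h2 - t.re| < h2 := by
          calc |(m:ℝ) * h2 - t.re| ≤ |(m:ℝ)*h2 - z.re| + |z.re - t.re| := abs_sub_le _ _ _
            _ < 3*δ + h2/2 := by
                rw [abs_sub_comm ((m:ℝ)*h2) z.re]
                exact add_lt_add_of_lt_of_le hm' hzre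
            _ ≤ h2 := by linarith
        -- translate into |m - sre| < 1
        have hsre_eq : t.re = sre * h2 := by
          rw [hsredef]
          rw [mul_assoc, mul_comm ((2:ℝ)^kk) h2, h2can, mul_one]
        have hd2 : |(m:ℝ) - sre| < 1 := by
          have e : (m:ℝ) * h2 - t.re = ((m:ℝ) - sre) * h2 := by rw [hsre_eq]; ring
          rw [e, abs_mul, abs_of_pos h2pos] at hd1
          calc |(m:ℝ) - sre| = |(m:ℝ) - sre| * h2 * (2:ℝ)^kk := by
                rw [mul_assoc, h2can, mul_one]
            _ < h2 * (2:ℝ)^kk := by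
                apply mul_lt_mul_of_pos_right hd1 (by positivity)
            _ = 1 := h2can
        have hlow : (⌊sre⌋ : ℝ) ≤ sre := Int.floor_le _
        have hhigh : sre < (⌊sre⌋ : ℝ) + 1 := Int.lt_floor_add_one _
        have habs := abs_lt.mp hd2
        have h5 : (m:ℝ) < (⌊sre⌋:ℝ) + 2 := by linarith
        have h6 : (⌊sre⌋:ℝ) - 1 < (m:ℝ) := by linarith
        have h5' : m < ⌊sre⌋ + 2 := by exact_mod_cast h5
        have h6' : ⌊sre⌋ - 1 < m := by exact_mod_cast h6
        omega
      have hlocH : ∀ m : ℤ, z ∈ stripH kk δ m → m = ⌊sim⌋ ∨ m = ⌊sim⌋ + 1 := by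
        intro m hm
        have hm' : |z.im - (m:ℝ) * h2| < 3*δ := hm
        have hd1 : |(m:ℝ) * h2 - t.im| < h2 := by
          calc |(m:ℝ) * h2 - t.im| ≤ |(m:ℝ)*h2 - z.im| + |z.im - t.im| := abs_sub_le _ _ _
            _ < 3*δ + h2/2 := by
                rw [abs_sub_comm ((m:ℝ)*h2) z.im]
                exact add_lt_add_of_lt_of_le hm' hzim
            _ ≤ h2 := by linarith
        have hsim_eq : t.im = sim * h2 := by
          rw [hsimdef]
          rw [mul_assoc, mul_comm ((2:ℝ)^kk) h2, h2can, mul_one]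
        have hd2 : |(m:ℝ) - sim| < 1 := by
          have e : (m:ℝ) * h2 - t.im = ((m:ℝ) - sim) * h2 := by rw [hsim_eq]; ring
          rw [e, abs_mul, abs_of_pos h2pos] at hd1
          calc |(m:ℝ) - sim| = |(m:ℝ) - sim| * h2 * (2:ℝ)^kk := by
                rw [mul_assoc, h2can, mul_one]
            _ < h2 * (2:ℝ)^kk := by
                apply mul_lt_mul_of_pos_right hd1 (by positivity)
            _ = 1 := h2can
        have hlow : (⌊sim⌋ : ℝ) ≤ sim := Int.floor_le _
        have hhigh : sim < (⌊sim⌋ : ℝ) + 1 := Int.lt_floor_add_one _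
        have habs := abs_lt.mp hd2
        have h5 : (m:ℝ) < (⌊sim⌋:ℝ) + 2 := by linarith
        have h6 : (⌊sim⌋:ℝ) - 1 < (m:ℝ) := by linarith
        have h5' : m < ⌊sim⌋ + 2 := by exact_mod_cast h5
        have h6' : ⌊sim⌋ - 1 < m := by exact_mod_cast h6
        omega
      -- now case on which strip
      rcases hstrip with ((hV | hV) | hH) | hH
      · rcases hlocV a.1 hV with h | h
        · exact Or.inl (show z ∈ stripV kk δ ⌊sre⌋ by rw [← h]; exact hV)
        · refine Or.inr (Or.inl ?_)
          have : z ∈ stripV kk δ (⌊sre⌋ + 1) := by rwa [← h]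
          exact this
      · rcases hlocV (a.1+1) hV with h | h
        · exact Or.inl (show z ∈ stripV kk δ ⌊sre⌋ by rw [← h]; exact hV)
        · refine Or.inr (Or.inl ?_)
          have : z ∈ stripV kk δ (⌊sre⌋ + 1) := by rwa [← h]
          exact this
      · rcases hlocH a.2 hH with h | h
        · exact Or.inr (Or.inr (Or.inl (show z ∈ stripH kk δ ⌊sim⌋ by rw [← h]; exact hH)))
        · refine Or.inr (Or.inr (Or.inr (Or.inl ?_)))
          have : z ∈ stripH kk δ (⌊sim⌋ + 1) := by rwa [← h]
          exact this
      · rcases hlocH (a.2+1) hH with h | h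
        · exact Or.inr (Or.inr (Or.inl (show z ∈ stripH kk δ ⌊sim⌋ by rw [← h]; exact hH)))
        · refine Or.inr (Or.inr (Or.inr (Or.inl ?_)))
          have : z ∈ stripH kk δ (⌊sim⌋ + 1) := by rwa [← h]
          exact this
    have hPne : P ≠ 0 := hlamne k'
    have htube : ∀ c : ℝ, (η (shiftN k' ω)) ((fun z => P * z + t) ⁻¹'
          {z : ℂ | |z.re - c| < 3*δ}) ≤ ENNReal.ofReal (C * (3*R*q^N)^ρ) := by
      intro c
      refine le_trans (frostman_stripV hF c (3*δ) (by linarith) P t hPne) ?_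
      apply ENNReal.ofReal_le_ofReal
      apply mul_le_mul_of_nonneg_left _ hC.le
      exact Real.rpow_le_rpow (div_nonneg (by linarith) (norm_nonneg _)) hW hρ.le
    have htubeH : ∀ c : ℝ, (η (shiftN k' ω)) ((fun z => P * z + t) ⁻¹'
          {z : ℂ | |z.im - c| < 3*δ}) ≤ ENNReal.ofReal (C * (3*R*q^N)^ρ) := by
      intro c
      refine le_trans (frostman_stripH hF c (3*δ) (by linarith) P t hPne) ?_
      apply ENNReal.ofReal_le_ofReal
      apply mul_le_mul_of_nonneg_left _ hC.le
      exact Real.rpow_le_rpow (by positivity) hW hρ.le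
    calc (η (shiftN k' ω)) ((fun z => P * z + t) ⁻¹'
          (⋃ a : ℤ × ℤ, (stripA kk δ a ∩ cell2 kk a)))
        ≤ (η (shiftN k' ω)) (((fun z => P * z + t) ⁻¹' {z : ℂ | |z.re - (⌊sre⌋ : ℝ) * h2| < 3*δ})
          ∪ (((fun z => P * z + t) ⁻¹' {z : ℂ | |z.re - ((⌊sre⌋+1 : ℤ) : ℝ) * h2| < 3*δ})
          ∪ (((fun z => P * z + t) ⁻¹' {z : ℂ | |z.im - (⌊sim⌋ : ℝ) * h2| < 3*δ})
          ∪ (((fun z => P * z + t) ⁻¹' {z : ℂ | |z.im - ((⌊sim⌋+1 : ℤ) : ℝ) * h2| < 3*δ})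
          ∪ {z : ℂ | R < ‖z‖})))) := measure_mono hsub
      _ ≤ ENNReal.ofReal (C * (3*R*q^N)^ρ) + (ENNReal.ofReal (C * (3*R*q^N)^ρ)
          + (ENNReal.ofReal (C * (3*R*q^N)^ρ) + (ENNReal.ofReal (C * (3*R*q^N)^ρ) + 0))) := by
          refine le_trans (measure_union_le _ _) (add_le_add (htube _) ?_)
          refine le_trans (measure_union_le _ _) (add_le_add (htube _) ?_)
          refine le_trans (measure_union_le _ _) (add_le_add (htubeH _) ?_)
          refine le_trans (measure_union_le _ _) (add_le_add (htubeH _) ?_)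
          rw [eta_outside hη hR]
      _ = ENNReal.ofReal (4 * (C * (3*R*q^N)^ρ)) := by
          rw [add_zero]
          rw [show (4:ℝ) * (C * (3*R*q^N)^ρ) = (C * (3*R*q^N)^ρ) + ((C * (3*R*q^N)^ρ)
            + ((C * (3*R*q^N)^ρ) + (C * (3*R*q^N)^ρ))) by ring]
          have hx : 0 ≤ C * (3*R*q^N)^ρ :=
            mul_nonneg hC.le (Real.rpow_nonneg
              (mul_nonneg (by linarith [hR.1] : (0:ℝ) ≤ 3*R) hqN0) _)
          rw [ENNReal.ofReal_add hx (add_nonneg hx (add_nonneg hx hx)),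
            ENNReal.ofReal_add hx (add_nonneg hx hx), ENNReal.ofReal_add hx hx]
  calc (∑ v : (j : Fin k') → Fin (M.k (ω j.val)),
        ENNReal.ofReal (∏ j : Fin k', M.p (ω j.val) (v j)) *
          (η (shiftN k' ω)) ((fun z => M.lamProd ω k' * z + M.finCode ω k' v) ⁻¹'
            (⋃ a : ℤ × ℤ, (stripA kk δ a ∩ cell2 kk a))))
      ≤ ∑ v : (j : Fin k') → Fin (M.k (ω j.val)),
        ENNReal.ofReal (∏ j : Fin k', M.p (ω j.val) (v j)) *
          ENNReal.ofReal (4 * (C * (3*R*q^N)^ρ)) :=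
        Finset.sum_le_sum fun v _ => mul_le_mul_right (hv v) _
    _ = ENNReal.ofReal (4 * (C * (3*R*q^N)^ρ)) := by
        rw [← Finset.sum_mul, sum_weights_one, one_mul]

end SSmodel
namespace SSmodel
open PlanarModel Filter

set_option maxHeartbeats 1000000 in
lemma key_statement {I : Type} [Fintype I] [MeasurableSpace I] (M : PlanarModel I)
    (η : (ℕ → I) → Measure ℂ) (hη : M.IsCodingFamily η)
    (R : ℝ) (hR : M.GoodRadius R)
    (np : (ℕ → I) → ℕ → ℕ) (hnp : M.IsNPrime R np)
    (ε C ρ : ℝ) (hε : 0 < ε) (hε2 : ε ≤ 2⁻¹) (hC : 0 < C) (hρ : 0 < ρ) :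
    ∃ N : ℕ, ∀ (ω : ℕ → I) (kk : ℕ),
      FrostmanOnTubes (η (shiftN (np ω kk) ω)) C ρ →
      1 - ε < ((η ω) {x | dTV (rawComponent (η ω) kk x)
          (truncComponent M η R ω (np ω kk + N) kk x) < ε}).toReal := by
  obtain ⟨q, hq0, hq1, hq⟩ := M.exists_q
  have hR0 : 0 < R := hR.1
  have hqq : ∀ N : ℕ, ((q^N : ℝ))^ρ = (q^ρ)^N := fun N => by
    rw [← Real.rpow_natCast q N, ← Real.rpow_mul hq0.le, mul_comm,
      Real.rpow_mul hq0.le, Real.rpow_natCast]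
  have heq : ∀ N : ℕ, C*(3*R*q^N)^ρ = (C*(3*R)^ρ) * ((q^ρ)^N) := by
    intro N
    rw [Real.mul_rpow (by linarith) (pow_nonneg hq0.le N), hqq, mul_assoc]
  have hgeo : Tendsto (fun N : ℕ => C * (3*R*q^N)^ρ) atTop (𝓝 0) := by
    have h1 : Tendsto (fun N : ℕ => (C*(3*R)^ρ) * ((q^ρ)^N)) atTop (𝓝 ((C*(3*R)^ρ) * 0)) :=
      (tendsto_pow_atTop_nhds_zero_of_lt_one (Real.rpow_nonneg hq0.le ρ)
        (Real.rpow_lt_one hq0.le hq1 hρ)).const_mul _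
    rw [mul_zero] at h1
    exact h1.congr (fun N => (heq N).symm)
  have hev1 : ∀ᶠ N in atTop, (ε/2)⁻¹ * (4 * (C * (3*R*q^N)^ρ)) < ε := by
    have h1 : Tendsto (fun N : ℕ => (ε/2)⁻¹ * (4 * (C * (3*R*q^N)^ρ))) atTop
        (𝓝 ((ε/2)⁻¹ * (4 * 0))) := (hgeo.const_mul 4).const_mul ((ε/2)⁻¹)
    rw [show (ε/2)⁻¹ * (4*(0:ℝ)) = 0 by ring] at h1
    exact h1.eventually_lt_const hε
  have hev2 : ∀ᶠ N in atTop, q^N ≤ 1/3 := by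
    have := (tendsto_pow_atTop_nhds_zero_of_lt_one hq0.le hq1).eventually_lt_const
      (show (0:ℝ) < 1/3 by norm_num)
    exact this.mono fun N h => h.le
  obtain ⟨N, hN1, hN2⟩ := (hev1.and hev2).exists
  refine ⟨N, ?_⟩
  intro ω kk hF
  haveI hPω : IsProbabilityMeasure (η ω) := eta_prob hη ω
  set δ : ℝ := R * ‖M.lamProd ω (np ω kk + N)‖ with hδdef
  have hnp1 : 2 * R * (∏ i ∈ Finset.range (np ω kk), ‖M.lam (ω i)‖)
      ≤ ((2:ℝ)^kk)⁻¹ := by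
    have h1 := (hnp ω kk).1
    rwa [show ((2:ℝ)^(-(kk:ℤ))) = ((2:ℝ)^kk)⁻¹ by rw [zpow_neg, zpow_natCast]] at h1
  have hGb := grid_mass hη hR hC hρ hq0 hq ω kk (np ω kk) N hF hnp1 hN2
  -- bad sets
  set badSet : Set (ℤ×ℤ) := {a : ℤ×ℤ | ENNReal.ofReal (ε/2) * η ω (cell2 kk a)
      ≤ η ω (stripA kk δ a ∩ cell2 kk a)} with hbadSetdef
  set zSet : Set (ℤ×ℤ) := {a : ℤ×ℤ | η ω (cell2 kk a) = 0} with hzSetdef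
  have hZ0 : η ω (⋃ a ∈ zSet, cell2 kk a) = 0 :=
    (measure_biUnion_null_iff (Set.to_countable _)).mpr (fun a ha => ha)
  have hε2pos : (0:ℝ) < ε/2 := by linarith
  have hofne : ENNReal.ofReal (ε/2) ≠ 0 := by
    simp only [Ne, ENNReal.ofReal_eq_zero, not_le]; exact hε2pos
  -- measure of Bad
  have hBadBound : η ω (⋃ a ∈ badSet, cell2 kk a)
      ≤ ENNReal.ofReal ((ε/2)⁻¹ * (4 * (C * (3*R*q^N)^ρ))) := by
    have h1 : η ω (⋃ a ∈ badSet, cell2 kk a) ≤ ∑' (a : ↑badSet), η ω (cell2 kk ↑a) :=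
      measure_biUnion_le _ (Set.to_countable _) _
    have h2 : ∀ a : ↑badSet, η ω (cell2 kk ↑a)
        ≤ (ENNReal.ofReal (ε/2))⁻¹ * η ω (stripA kk δ ↑a ∩ cell2 kk ↑a) := by
      rintro ⟨a, ha⟩
      have := ha
      rw [hbadSetdef, Set.mem_setOf_eq] at this
      calc η ω (cell2 kk a)
          = (ENNReal.ofReal (ε/2))⁻¹ * (ENNReal.ofReal (ε/2) * η ω (cell2 kk a)) := by
            rw [← mul_assoc, ENNReal.inv_mul_cancel hofne ENNReal.ofReal_ne_top, one_mul]
        _ ≤ (ENNReal.ofReal (ε/2))⁻¹ * η ω (stripA kk δ a ∩ cell2 kk a) :=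
            mul_le_mul_right this _
    have hdisj : badSet.PairwiseDisjoint (fun a => stripA kk δ a ∩ cell2 kk a) := by
      intro a _ b _ hab
      apply Set.disjoint_left.mpr
      rintro z ⟨_, hz1⟩ ⟨_, hz2⟩
      exact hab (by rw [← cellIdx_eq_of_mem hz1, cellIdx_eq_of_mem hz2])
    have h3 : ∑' (a : ↑badSet), η ω (stripA kk δ ↑a ∩ cell2 kk ↑a)
        = η ω (⋃ a ∈ badSet, (stripA kk δ a ∩ cell2 kk a)) :=
      (measure_biUnion (Set.to_countable _) hdisj
        (fun a _ => (measurableSet_stripA _ _ _).inter (measurableSet_cell2 _ _))).symm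
    have h4 : η ω (⋃ a ∈ badSet, (stripA kk δ a ∩ cell2 kk a))
        ≤ η ω (⋃ a : ℤ×ℤ, (stripA kk δ a ∩ cell2 kk a)) :=
      measure_mono (Set.iUnion₂_subset fun a _ => Set.subset_iUnion
        (fun a : ℤ×ℤ => stripA kk δ a ∩ cell2 kk a) a)
    calc η ω (⋃ a ∈ badSet, cell2 kk a)
        ≤ ∑' (a : ↑badSet), η ω (cell2 kk ↑a) := h1
      _ ≤ ∑' (a : ↑badSet), (ENNReal.ofReal (ε/2))⁻¹ * η ω (stripA kk δ ↑a ∩ cell2 kk ↑a) :=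
          ENNReal.tsum_le_tsum h2
      _ = (ENNReal.ofReal (ε/2))⁻¹ * ∑' (a : ↑badSet), η ω (stripA kk δ ↑a ∩ cell2 kk ↑a) :=
          ENNReal.tsum_mul_left
      _ ≤ (ENNReal.ofReal (ε/2))⁻¹ * ENNReal.ofReal (4 * (C * (3*R*q^N)^ρ)) := by
          rw [h3]
          exact mul_le_mul_right (le_trans h4 hGb) _
      _ = ENNReal.ofReal ((ε/2)⁻¹ * (4 * (C * (3*R*q^N)^ρ))) := by
          have e1 : ENNReal.ofReal ((ε/2)⁻¹ * (4 * (C * (3*R*q^N)^ρ)))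
              = ENNReal.ofReal ((ε/2)⁻¹) * ENNReal.ofReal (4 * (C * (3*R*q^N)^ρ)) :=
            ENNReal.ofReal_mul (inv_nonneg.mpr hε2pos.le)
          rw [e1, ENNReal.ofReal_inv_of_pos hε2pos]
  have hBZmeas : MeasurableSet ((⋃ a ∈ badSet, cell2 kk a) ∪ (⋃ a ∈ zSet, cell2 kk a)) :=
    (MeasurableSet.biUnion (Set.to_countable _) (fun a _ => measurableSet_cell2 kk a)).union
      (MeasurableSet.biUnion (Set.to_countable _) (fun a _ => measurableSet_cell2 kk a))
  have hBZlt : ((η ω) ((⋃ a ∈ badSet, cell2 kk a) ∪ (⋃ a ∈ zSet, cell2 kk a))).toReal < ε := by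
    have h1 : η ω ((⋃ a ∈ badSet, cell2 kk a) ∪ (⋃ a ∈ zSet, cell2 kk a))
        ≤ ENNReal.ofReal ((ε/2)⁻¹ * (4 * (C * (3*R*q^N)^ρ))) := by
      calc η ω ((⋃ a ∈ badSet, cell2 kk a) ∪ (⋃ a ∈ zSet, cell2 kk a))
          ≤ η ω (⋃ a ∈ badSet, cell2 kk a) + η ω (⋃ a ∈ zSet, cell2 kk a) :=
            measure_union_le _ _
        _ = η ω (⋃ a ∈ badSet, cell2 kk a) := by rw [hZ0, add_zero]
        _ ≤ _ := hBadBound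
    calc ((η ω) ((⋃ a ∈ badSet, cell2 kk a) ∪ (⋃ a ∈ zSet, cell2 kk a))).toReal
        ≤ (ENNReal.ofReal ((ε/2)⁻¹ * (4 * (C * (3*R*q^N)^ρ)))).toReal :=
          ENNReal.toReal_mono ENNReal.ofReal_ne_top h1
      _ = (ε/2)⁻¹ * (4 * (C * (3*R*q^N)^ρ)) := ENNReal.toReal_ofReal
            (mul_nonneg (inv_nonneg.mpr hε2pos.le) (mul_nonneg (by norm_num)
              (mul_nonneg hC.le (Real.rpow_nonneg
                (mul_nonneg (mul_nonneg (by norm_num) hR0.le) (pow_nonneg hq0.le N)) _))))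
      _ < ε := hN1
  -- the good set is contained in the target set
  have hsubGood : ((⋃ a ∈ badSet, cell2 kk a) ∪ (⋃ a ∈ zSet, cell2 kk a))ᶜ
      ⊆ {x | dTV (rawComponent (η ω) kk x)
          (truncComponent M η R ω (np ω kk + N) kk x) < ε} := by
    intro x hx
    simp only [Set.mem_compl_iff, Set.mem_union, not_or] at hx
    obtain ⟨hxB, hxZ⟩ := hx
    have hxcell : x ∈ cell2 kk (cellIdx kk x) := mem_cell2_cellIdx kk x
    have ha0 : η ω (dyadicCellOf kk x) ≠ 0 := by
      intro h0
      exact hxZ (Set.mem_biUnion (show cellIdx kk x ∈ zSet from h0) hxcell)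
    have hdlt : η ω (stripA kk δ (cellIdx kk x) ∩ cell2 kk (cellIdx kk x))
        < ENNReal.ofReal (ε/2) * η ω (dyadicCellOf kk x) := by
      by_contra hge
      push_neg at hge
      exact hxB (Set.mem_biUnion (show cellIdx kk x ∈ badSet from hge) hxcell)
    exact trunc_close hη hR ω (np ω kk + N) kk x hε hε2 ha0 hdlt
  have hcompl : η ω (((⋃ a ∈ badSet, cell2 kk a) ∪ (⋃ a ∈ zSet, cell2 kk a))ᶜ)
      = 1 - η ω ((⋃ a ∈ badSet, cell2 kk a) ∪ (⋃ a ∈ zSet, cell2 kk a)) := by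
    rw [measure_compl hBZmeas (measure_ne_top _ _), measure_univ]
  calc 1 - ε
      < 1 - ((η ω) ((⋃ a ∈ badSet, cell2 kk a) ∪ (⋃ a ∈ zSet, cell2 kk a))).toReal := by
        linarith
    _ = ((η ω) (((⋃ a ∈ badSet, cell2 kk a) ∪ (⋃ a ∈ zSet, cell2 kk a))ᶜ)).toReal := by
        rw [hcompl, ENNReal.toReal_sub_of_le prob_le_one ENNReal.one_ne_top, ENNReal.toReal_one]
    _ ≤ ((η ω) {x | dTV (rawComponent (η ω) kk x)
          (truncComponent M η R ω (np ω kk + N) kk x) < ε}).toReal :=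
        ENNReal.toReal_mono (measure_ne_top _ _) (measure_mono hsubGood)

end SSmodel


/-- Approximation of raw components by truncated components in total
variation, given the Frostman-on-tubes property of η^{(T^{k'(ω)}ω)}. -/
theorem stmt_17 {I : Type} [Fintype I] [MeasurableSpace I] (M : PlanarModel I)
    (η : (ℕ → I) → Measure ℂ) (hη : M.IsCodingFamily η)
    (R : ℝ) (hR : M.GoodRadius R)
    (np : (ℕ → I) → ℕ → ℕ) (hnp : M.IsNPrime R np) :
    ∀ ε C ρ : ℝ, 0 < ε → 0 < C → 0 < ρ → ∃ N : ℕ, ∀ (ω : ℕ → I) (kk : ℕ),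
      FrostmanOnTubes (η (shiftN (np ω kk) ω)) C ρ →
      1 - ε < ((η ω) {x | dTV (rawComponent (η ω) kk x)
          (truncComponent M η R ω (np ω kk + N) kk x) < ε}).toReal := by
  intro ε C ρ hε hC hρ
  set ε' : ℝ := min ε 2⁻¹ with hε'def
  have hε'pos : 0 < ε' := lt_min hε (by norm_num)
  have hε'le : ε' ≤ 2⁻¹ := min_le_right _ _
  have hε'ε : ε' ≤ ε := min_le_left _ _
  obtain ⟨N, hN⟩ := key_statement M η hη R hR np hnp ε' C ρ hε'pos hε'le hC hρ
  refine ⟨N, fun ω kk hF => ?_⟩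
  haveI : IsProbabilityMeasure (η ω) := eta_prob hη ω
  have h1 := hN ω kk hF
  have hsub : {x | dTV (rawComponent (η ω) kk x)
        (truncComponent M η R ω (np ω kk + N) kk x) < ε'}
      ⊆ {x | dTV (rawComponent (η ω) kk x)
        (truncComponent M η R ω (np ω kk + N) kk x) < ε} :=
    fun x hx => lt_of_lt_of_le hx hε'ε
  calc 1 - ε ≤ 1 - ε' := by linarith
    _ < ((η ω) {x | dTV (rawComponent (η ω) kk x)
        (truncComponent M η R ω (np ω kk + N) kk x) < ε'}).toReal := h1
    _ ≤ ((η ω) {x | dTV (rawComponent (η ω) kk x)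
        (truncComponent M η R ω (np ω kk + N) kk x) < ε}).toReal :=
      ENNReal.toReal_mono (measure_ne_top _ _) (measure_mono hsub)
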